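/- arXiv:1902.00572 — 4 statements merged into one kernel-verified Lean document; each statement's English description precedes it below -/
import Mathlib

section
/- Let n be a positive integer, let A be a tournament matrix of order n, let μ₁,…,μₙ ∈ ℂ be the eigenvalues of A with multiplicity, and let ρ = (maxᵢ |μᵢ|)/n be the spectral radius of A divided by n. Then 0 < ρ ≤ 1/2 and σ₃(A) ≤ ⌊ρ⁻¹/2⌋·ρ³ + (1/2 − ⌊ρ⁻¹/2⌋·ρ)³. -/
open Finset

noncomputable def fr (ρ s : ℝ) : ℝ := s - ρ * ⌊s / ρ⌋

lemma fr_nonneg {ρ : ℝ} (hρ : 0 < ρ) (s : ℝ) : 0 ≤ fr ρ s := by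
  have h := Int.floor_le (s / ρ)
  have : ρ * ⌊s / ρ⌋ ≤ ρ * (s / ρ) := mul_le_mul_of_nonneg_left h hρ.le
  rw [mul_div_cancel₀ _ hρ.ne'] at this
  simp only [fr]; linarith

lemma fr_lt {ρ : ℝ} (hρ : 0 < ρ) (s : ℝ) : fr ρ s < ρ := by
  have h := Int.lt_floor_add_one (s / ρ)
  have : ρ * (s / ρ) < ρ * (⌊s / ρ⌋ + 1) := mul_lt_mul_of_pos_left h hρ
  rw [mul_div_cancel₀ _ hρ.ne'] at this
  simp only [fr]; nlinarith

lemma cube_superadd {ρ : ℝ} (hρ : 0 < ρ) {ι : Type*} (t : Finset ι) (y : ι → ℝ)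
    (hy : ∀ i ∈ t, 0 ≤ y i ∧ y i ≤ ρ) :
    fr ρ (∑ i ∈ t, y i) * (ρ^2 - fr ρ (∑ i ∈ t, y i)^2)
      ≤ ∑ i ∈ t, (ρ^2 * y i - y i ^ 3) := by
  induction t using Finset.cons_induction with
  | empty => simp [fr, hρ.ne']
  | cons a t ha ih =>
    have hy' : ∀ i ∈ t, 0 ≤ y i ∧ y i ≤ ρ := fun i hi => hy i (mem_cons.2 (Or.inr hi))
    have hIH := ih hy'
    obtain ⟨ha0, haρ⟩ := hy a (mem_cons_self a t)
    set s := ∑ i ∈ t, y i with hs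
    set r := fr ρ s with hrdef
    have hr0 : 0 ≤ r := fr_nonneg hρ s
    have hrρ : r < ρ := fr_lt hρ s
    set k : ℤ := ⌊s / ρ⌋ with hk
    have hsr : s = ρ * k + r := by simp only [hrdef, fr, hk]; ring
    rw [Finset.sum_cons, Finset.sum_cons]
    by_cases hcase : r + y a < ρ
    · have hfloor : ⌊(y a + s) / ρ⌋ = k := by
        rw [Int.floor_eq_iff]
        constructor
        · rw [le_div_iff₀ hρ]; nlinarith
        · rw [div_lt_iff₀ hρ]; push_cast; nlinarith
      have hfr : fr ρ (y a + s) = y a + r := by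
        simp only [fr, hfloor]; linarith [hsr]
      rw [hfr]
      nlinarith [mul_nonneg (mul_nonneg hr0 ha0) (add_nonneg hr0 ha0), hIH]
    · push_neg at hcase
      have hfloor : ⌊(y a + s) / ρ⌋ = k + 1 := by
        rw [Int.floor_eq_iff]
        constructor
        · rw [le_div_iff₀ hρ]; push_cast; nlinarith
        · rw [div_lt_iff₀ hρ]; push_cast; nlinarith
      have hfr : fr ρ (y a + s) = y a + r - ρ := by
        simp only [fr, hfloor]; push_cast; linarith [hsr]
      rw [hfr]
      nlinarith [mul_nonneg (mul_nonneg (sub_nonneg.2 hrρ.le) (sub_nonneg.2 haρ))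
        (add_nonneg hr0 ha0), hIH]

lemma cube_sum_bound {ρ : ℝ} (hρ : 0 < ρ) {ι : Type*} (t : Finset ι) (y : ι → ℝ)
    (hy : ∀ i ∈ t, 0 ≤ y i ∧ y i ≤ ρ) (hsum : ∑ i ∈ t, y i = 1/2) :
    ∑ i ∈ t, y i ^ 3
      ≤ ((⌊ρ⁻¹ / 2⌋ : ℤ) : ℝ) * ρ ^ 3 + (1/2 - ((⌊ρ⁻¹ / 2⌋ : ℤ) : ℝ) * ρ) ^ 3 := by
  have h := cube_superadd hρ t y hy
  rw [hsum] at h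
  have hfe : (1:ℝ)/2/ρ = ρ⁻¹/2 := by field_simp
  set k : ℤ := ⌊ρ⁻¹ / 2⌋ with hk
  have hfr : fr ρ (1/2) = 1/2 - ρ * k := by rw [fr, hfe, ← hk]
  rw [hfr] at h
  have hsplit : ∑ i ∈ t, (ρ^2 * y i - y i ^3) = ρ^2 * (1/2) - ∑ i ∈ t, y i ^ 3 := by
    rw [Finset.sum_sub_distrib, ← Finset.mul_sum, hsum]
  rw [hsplit] at h
  nlinarith [h]


open Matrix Complex Finset

lemma eig_bounds {n : ℕ} (A : Matrix (Fin n) (Fin n) ℝ)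
    (hA0 : ∀ i j, 0 ≤ A i j) (hsum : ∀ i j, A i j + A j i = 1)
    {μ : ℂ} {v : Fin n → ℂ} (hv : v ≠ 0)
    (heig : (A.map (Complex.ofReal : ℝ → ℂ)).mulVec v = μ • v) :
    0 ≤ μ.re ∧ ‖μ‖ ≤ n / 2 := by
  classical
  set S : ℝ := ∑ i, Complex.normSq (v i) with hSdef
  have hSpos : 0 < S := by
    obtain ⟨i, hi⟩ := Function.ne_iff.1 hv
    exact Finset.sum_pos' (fun i _ => Complex.normSq_nonneg _)
      ⟨i, Finset.mem_univ i, Complex.normSq_pos.2 hi⟩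
  have key : ∀ i, ∑ j, (A i j : ℂ) * v j = μ * v i := by
    intro i
    have := congrFun heig i
    simpa [Matrix.mulVec, dotProduct, Matrix.map_apply] using this
  have hT : ∑ i, ∑ j, (starRingEnd ℂ) (v i) * (A i j : ℂ) * v j = μ * (S : ℂ) := by
    have : ∀ i, ∑ j, (starRingEnd ℂ) (v i) * (A i j : ℂ) * v j
        = (starRingEnd ℂ) (v i) * (μ * v i) := by
      intro i
      rw [← key i, Finset.mul_sum]
      exact Finset.sum_congr rfl fun j _ => by ring
    rw [Finset.sum_congr rfl fun i _ => this i]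
    have : ∀ i, (starRingEnd ℂ) (v i) * (μ * v i) = μ * (Complex.normSq (v i) : ℂ) := by
      intro i
      rw [Complex.normSq_eq_conj_mul_self]
      ring
    rw [Finset.sum_congr rfl fun i _ => this i, ← Finset.mul_sum, hSdef]
    push_cast
    ring
  -- part 1 : real part nonneg
  have hconjT : ∑ i, ∑ j, (v i) * (A i j : ℂ) * (starRingEnd ℂ) (v j)
      = (starRingEnd ℂ) μ * (S : ℂ) := by
    have h := congrArg (starRingEnd ℂ) hT
    simp only [map_sum, _root_.map_mul, Complex.conj_ofReal, Complex.conj_conj] at h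
    exact h
  have hadd : (μ + (starRingEnd ℂ) μ) * (S : ℂ)
      = ((starRingEnd ℂ) (∑ i, v i)) * (∑ i, v i) := by
    have hswap : ∑ i, ∑ j, (v i) * (A i j : ℂ) * (starRingEnd ℂ) (v j)
        = ∑ i, ∑ j, (starRingEnd ℂ) (v i) * (A j i : ℂ) * v j := by
      rw [Finset.sum_comm]
      exact Finset.sum_congr rfl fun i _ => Finset.sum_congr rfl fun j _ => by ring
    have : μ * (S:ℂ) + (starRingEnd ℂ) μ * (S:ℂ)
        = ∑ i, ∑ j, (starRingEnd ℂ) (v i) * ((A i j : ℂ) + (A j i : ℂ)) * v j := by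
      rw [← hT, ← hconjT, hswap, ← Finset.sum_add_distrib]
      exact Finset.sum_congr rfl fun i _ => by
        rw [← Finset.sum_add_distrib]
        exact Finset.sum_congr rfl fun j _ => by ring
    have h1 : ∀ i j, ((A i j : ℂ) + (A j i : ℂ)) = 1 := by
      intro i j
      exact_mod_cast hsum i j
    simp only [h1, mul_one, one_mul] at this
    rw [add_mul, this, map_sum, Finset.sum_mul_sum]
  have hre : 0 ≤ μ.re := by
    have h2 : ((μ + (starRingEnd ℂ) μ) * (S : ℂ)).re = 2 * μ.re * S := by
      rw [Complex.add_conj, ← Complex.ofReal_mul, Complex.ofReal_re]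
    have h3 : (((starRingEnd ℂ) (∑ i, v i)) * (∑ i, v i)).re
        = Complex.normSq (∑ i, v i) := by
      rw [← Complex.normSq_eq_conj_mul_self]
      simp
    have := congrArg Complex.re hadd
    rw [h2, h3] at this
    nlinarith [Complex.normSq_nonneg (∑ i, v i)]
  -- part 2 : modulus bound
  refine ⟨hre, ?_⟩
  set w : Fin n → ℝ := fun i => ‖v i‖ with hwdef
  have habs : ‖μ * (S:ℂ)‖ ≤ ∑ i, ∑ j, A i j * (w i * w j) := by
    rw [← hT]
    refine le_trans (norm_sum_le _ _) ?_
    refine Finset.sum_le_sum fun i _ => ?_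
    refine le_trans (norm_sum_le _ _) ?_
    refine le_of_eq (Finset.sum_congr rfl fun j _ => ?_)
    simp only [norm_mul, Complex.norm_conj, Complex.norm_real, Real.norm_eq_abs]
    rw [_root_.abs_of_nonneg (hA0 i j)]
    ring
  have hsym : (2:ℝ) * ∑ i, ∑ j, A i j * (w i * w j) = (∑ i, w i)^2 := by
    have hswap : ∑ i, ∑ j, A i j * (w i * w j) = ∑ i, ∑ j, A j i * (w i * w j) := by
      rw [Finset.sum_comm]
      exact Finset.sum_congr rfl fun i _ => Finset.sum_congr rfl fun j _ => by ring
    have : (2:ℝ) * ∑ i, ∑ j, A i j * (w i * w j)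
        = ∑ i, ∑ j, (A i j + A j i) * (w i * w j) := by
      rw [two_mul]
      nth_rewrite 2 [hswap]
      rw [← Finset.sum_add_distrib]
      exact Finset.sum_congr rfl fun i _ => by
        rw [← Finset.sum_add_distrib]
        exact Finset.sum_congr rfl fun j _ => by ring
    simp only [hsum, one_mul] at this
    rw [this, sq, Finset.sum_mul_sum]
  have hCS : (∑ i, w i)^2 ≤ n * S := by
    have := sq_sum_le_card_mul_sum_sq (s := (Finset.univ : Finset (Fin n))) (f := w)
    simp only [Finset.card_univ, Fintype.card_fin] at this
    refine le_trans this (le_of_eq ?_)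
    congr 1
    exact Finset.sum_congr rfl fun i _ => by rw [hwdef]; exact Complex.sq_norm (v i)
  have habs2 : ‖μ‖ * S ≤ (n / 2) * S := by
    have h4 : ‖μ * (S:ℂ)‖ = ‖μ‖ * S := by
      rw [norm_mul, Complex.norm_real, Real.norm_eq_abs, _root_.abs_of_nonneg hSpos.le]
    nlinarith [habs, hsym, hCS]
  exact le_of_mul_le_mul_right (by linarith) hSpos


open Polynomial Matrix

lemma exists_eigenvec {m : Type*} [Fintype m] [DecidableEq m] (M : Matrix m m ℂ) {μ : ℂ}
    (h : M.charpoly.IsRoot μ) : ∃ v, v ≠ 0 ∧ M.mulVec v = μ • v := by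
  have hmap : (charmatrix M).map (Polynomial.evalRingHom μ) = μ • 1 - M := by
    ext i j
    by_cases hij : i = j
    · subst hij
      simp [charmatrix_apply_eq, Matrix.map_apply, Matrix.one_apply]
    · simp [charmatrix_apply_ne _ _ _ hij, Matrix.map_apply, Matrix.one_apply, hij]
  have hdet : (μ • (1 : Matrix m m ℂ) - M).det = 0 := by
    rw [← hmap, ← RingHom.mapMatrix_apply, ← RingHom.map_det]
    simpa [Matrix.charpoly] using h
  have hdet2 : (M - μ • (1 : Matrix m m ℂ)).det = 0 := by
    have : M - μ • (1 : Matrix m m ℂ) = -(μ • 1 - M) := (neg_sub _ _).symm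
    rw [this, Matrix.det_neg, hdet, mul_zero]
  obtain ⟨v, hv0, hv⟩ := (Matrix.exists_mulVec_eq_zero_iff).2 hdet2
  refine ⟨v, hv0, ?_⟩
  rw [Matrix.sub_mulVec, Matrix.smul_mulVec, Matrix.one_mulVec] at hv
  have := sub_eq_zero.1 hv
  exact this

lemma charpoly_conj_eq {m : Type*} [Fintype m] [DecidableEq m] (M P Q : Matrix m m ℂ)
    (hPQ : P * Q = 1) (hQP : Q * P = 1) : (Q * M * P).charpoly = M.charpoly := by
  have hmapQP : (Q.map (Polynomial.C)) * (P.map (Polynomial.C)) = 1 := by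
    rw [← Matrix.map_mul, hQP]
    simp
  have hcm : charmatrix (Q * M * P)
      = (Q.map (Polynomial.C)) * charmatrix M * (P.map (Polynomial.C)) := by
    unfold charmatrix
    rw [Matrix.mul_sub, Matrix.sub_mul]
    congr 1
    · -- Qc * scalar X * Pc = scalar X
      symm
      rw [← (Matrix.scalar_commute (X : ℂ[X]) (fun r => Commute.all _ _)
        (Q.map (Polynomial.C))).eq, Matrix.mul_assoc, hmapQP, Matrix.mul_one]
    · simp only [RingHom.mapMatrix_apply]
      rw [← Matrix.map_mul, ← Matrix.map_mul]
  have hmapPQ : (P.map (Polynomial.C)) * (Q.map (Polynomial.C)) = 1 := by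
    rw [← Matrix.map_mul, hPQ]
    simp
  rw [Matrix.charpoly, hcm, Matrix.det_mul, Matrix.det_mul]
  have h6 : (Q.map (Polynomial.C)).det * M.charmatrix.det * (P.map (Polynomial.C)).det
      = ((P.map (Polynomial.C)) * (Q.map (Polynomial.C))).det * M.charmatrix.det := by
    rw [Matrix.det_mul]; ring
  rw [h6, hmapPQ]
  simp [Matrix.charpoly]

lemma trace_pow3_reindex {m l : Type*} [Fintype m] [DecidableEq m] [Fintype l] [DecidableEq l]
    (e : m ≃ l) (M : Matrix m m ℂ) :
    Matrix.trace ((Matrix.reindex e e M) ^ 3) = Matrix.trace (M ^ 3) := by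
  have h1 : (Matrix.reindex e e M) ^ 3 = Matrix.reindex e e (M ^ 3) := by
    have := map_pow (Matrix.reindexAlgEquiv ℂ ℂ e) M 3
    simpa only [Matrix.reindexAlgEquiv_apply] using this.symm
  rw [h1, Matrix.reindex_apply]
  have h2 : ((M ^ 3).submatrix e.symm e.symm).trace = ∑ i, (M ^ 3) (e.symm i) (e.symm i) := rfl
  rw [h2]
  exact Equiv.sum_comp e.symm fun x => (M ^ 3) x x

set_option maxHeartbeats 1000000 in
lemma trace_cube_key : ∀ (N : ℕ) (m : Type) [Fintype m] [DecidableEq m], Fintype.card m = N →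
    ∀ (M : Matrix m m ℂ),
      Matrix.trace (M ^ 3) = (M.charpoly.roots.map (fun z => z ^ 3)).sum := by
  intro N
  induction N using Nat.strong_induction_on with
  | _ N ih =>
    intro m _ _ hcard M
    rcases isEmpty_or_nonempty m with hm | hm
    · have h1 : M.charpoly = 1 := by
        rw [Matrix.charpoly, Matrix.det_isEmpty]
      rw [h1, Polynomial.roots_one]
      simp [Matrix.trace]
    · classical
      have hdeg : M.charpoly.degree ≠ 0 := by
        rw [Matrix.charpoly_degree_eq_dim]
        exact_mod_cast (Fintype.card_pos (α := m)).ne'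
      obtain ⟨μ, hμroot⟩ := IsAlgClosed.exists_root M.charpoly hdeg
      obtain ⟨v, hv0, hveq⟩ := exists_eigenvec M hμroot
      obtain ⟨j, hj0⟩ := Function.ne_iff.1 hv0
      have hj : v j ≠ 0 := by simpa using hj0
      set w : m → ℂ := (v j)⁻¹ • v with hw
      have hwj : w j = 1 := by
        simp [hw, inv_mul_cancel₀ hj]
      have hweq : M.mulVec w = μ • w := by
        rw [hw, Matrix.mulVec_smul, hveq]
        ext i
        simp only [Pi.smul_apply, smul_eq_mul]
        ring
      set u : m → ℂ := w - Pi.single j 1 with hu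
      have huj : u j = 0 := by simp [hu, hwj]
      set E : Matrix m m ℂ := Matrix.of (fun i k => if k = j then u i else 0) with hE
      have hEE : E * E = 0 := by
        ext i k
        simp only [Matrix.mul_apply, hE, Matrix.of_apply, Matrix.zero_apply]
        rw [Finset.sum_eq_single j]
        · simp [huj]
        · intro b _ hb; simp [hb]
        · intro h; exact absurd (Finset.mem_univ j) h
      set P : Matrix m m ℂ := 1 + E with hP
      set Q : Matrix m m ℂ := 1 - E with hQ
      have hPQ : P * Q = 1 := by
        rw [hP, hQ, Matrix.mul_sub, Matrix.add_mul, Matrix.add_mul, hEE]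
        simp
      have hQP : Q * P = 1 := by
        rw [hP, hQ, Matrix.mul_add, Matrix.sub_mul, Matrix.sub_mul, hEE]
        simp
      set Nn : Matrix m m ℂ := Q * M * P with hNn
      -- column j of Nn
      have hPcol : P.mulVec (Pi.single j 1) = w := by
        ext i
        rw [Matrix.mulVec_single]
        simp only [hP, Matrix.add_apply, Matrix.one_apply, hE, Matrix.of_apply, if_pos rfl,
          mul_one]
        by_cases hij : i = j
        · subst hij; simp [huj, hwj]
        · simp [hij, hu]
      have hEw : E.mulVec w = u := by
        ext i
        simp only [Matrix.mulVec, dotProduct, hE, Matrix.of_apply]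
        rw [Finset.sum_eq_single j]
        · simp [hwj]
        · intro b _ hb; simp [hb]
        · intro h; exact absurd (Finset.mem_univ j) h
      have hcolv : Nn.mulVec (Pi.single j 1) = μ • (Pi.single j 1 : m → ℂ) := by
        rw [hNn, ← Matrix.mulVec_mulVec, ← Matrix.mulVec_mulVec, hPcol, hweq,
          Matrix.mulVec_smul]
        congr 1
        rw [hQ, Matrix.sub_mulVec, Matrix.one_mulVec, hEw]
        ext i
        simp [hu]
      have hcol : ∀ i, Nn i j = if i = j then μ else 0 := by
        intro i
        have := congrFun hcolv i
        simp only [Matrix.mulVec_single, Matrix.col_apply, op_smul_eq_mul, mul_one, Pi.smul_apply, Pi.single_apply,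
          smul_eq_mul] at this
        rw [this]
        by_cases hij : i = j
        · subst hij; simp
        · simp [hij]
      -- reindex to a sum type
      haveI : Unique {x // x = j} := ⟨⟨⟨j, rfl⟩⟩, fun x => Subtype.ext x.2⟩
      set e : ({x // x = j} ⊕ {x // ¬ x = j}) ≃ m := Equiv.sumCompl (· = j) with he
      set R : Matrix _ _ ℂ := Matrix.reindex e.symm e.symm Nn with hR
      have hRapp : ∀ a b, R a b = Nn (e a) (e b) := by
        intro a b; simp [hR, Matrix.reindex_apply, Matrix.submatrix_apply]
      have hB21 : R.toBlocks₂₁ = 0 := by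
        ext i k
        simp only [Matrix.toBlocks₂₁, Matrix.of_apply, Matrix.zero_apply]
        rw [hRapp]
        have h1 : e (Sum.inr i) = i.1 := rfl
        have h2 : e (Sum.inl k) = k.1 := rfl
        rw [h1, h2, k.2, hcol]
        simp [i.2]
      have hblock : R = Matrix.fromBlocks R.toBlocks₁₁ R.toBlocks₁₂ 0 R.toBlocks₂₂ := by
        rw [← hB21, Matrix.fromBlocks_toBlocks]
      have hA11 : R.toBlocks₁₁ = μ • (1 : Matrix {x // x = j} {x // x = j} ℂ) := by
        ext a b
        have hab : a = b := Subsingleton.elim a b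
        subst hab
        simp only [Matrix.toBlocks₁₁, Matrix.of_apply, Matrix.smul_apply, Matrix.one_apply_eq,
          smul_eq_mul, mul_one]
        rw [hRapp]
        have h2 : e (Sum.inl a) = a.1 := rfl
        rw [h2, a.2, hcol]
        simp
      -- charpoly bookkeeping
      have hcpM : M.charpoly = (X - C μ) * R.toBlocks₂₂.charpoly := by
        have h1 : M.charpoly = Nn.charpoly := (charpoly_conj_eq M P Q hPQ hQP).symm
        have h2 : Nn.charpoly = R.charpoly := (Matrix.charpoly_reindex e.symm Nn).symm
        have h3 : R.charpoly = R.toBlocks₁₁.charpoly * R.toBlocks₂₂.charpoly := by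
          conv_lhs => rw [hblock]
          exact Matrix.charpoly_fromBlocks_zero₂₁ _ _ _
        have h4 : R.toBlocks₁₁.charpoly = X - C μ := by
          rw [Matrix.charpoly, Matrix.det_unique, charmatrix_apply_eq, hA11]
          simp
        rw [h1, h2, h3, h4]
      -- trace bookkeeping
      have htr : Matrix.trace (M ^ 3) = μ ^ 3 + Matrix.trace (R.toBlocks₂₂ ^ 3) := by
        have hconj2 : ∀ (X Y : Matrix m m ℂ), (Q*X*P)*(Q*Y*P) = Q*(X*Y)*P := by
          intro X Y
          have h5 : (Q*X*P)*(Q*Y*P) = Q*(X*((P*Q)*(Y*P))) := by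
            simp only [Matrix.mul_assoc]
          rw [h5, hPQ]
          simp only [Matrix.one_mul, Matrix.mul_assoc]
        have hN3 : Nn ^ 3 = Q * (M ^ 3) * P := by
          have : Nn ^ 3 = Nn * Nn * Nn := by rw [pow_succ, pow_two]
          rw [this, hNn, hconj2, hconj2]
          congr 1
          · congr 1
            rw [pow_succ, pow_succ, pow_one]
        have htrN : Matrix.trace (Nn ^ 3) = Matrix.trace (M ^ 3) := by
          rw [hN3, Matrix.mul_assoc, Matrix.trace_mul_comm, Matrix.mul_assoc, hPQ,
            Matrix.mul_one]
        have htrR : Matrix.trace (R ^ 3) = Matrix.trace (Nn ^ 3) := trace_pow3_reindex e.symm Nn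
        have hRcube : R ^ 3 = Matrix.fromBlocks
            (R.toBlocks₁₁ * (R.toBlocks₁₁ * R.toBlocks₁₁))
            (R.toBlocks₁₁ * (R.toBlocks₁₁ * R.toBlocks₁₂ + R.toBlocks₁₂ * R.toBlocks₂₂)
              + R.toBlocks₁₂ * (R.toBlocks₂₂ * R.toBlocks₂₂)) 0
            (R.toBlocks₂₂ * (R.toBlocks₂₂ * R.toBlocks₂₂)) := by
          have hsq : R * R = Matrix.fromBlocks (R.toBlocks₁₁ * R.toBlocks₁₁)
              (R.toBlocks₁₁ * R.toBlocks₁₂ + R.toBlocks₁₂ * R.toBlocks₂₂) 0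
              (R.toBlocks₂₂ * R.toBlocks₂₂) := by
            conv_lhs => rw [hblock]
            rw [Matrix.fromBlocks_multiply]
            simp
          have hcube : R ^ 3 = R * (R * R) := by rw [pow_succ', pow_two]
          rw [hcube, hsq]
          conv_lhs => rw [hblock]
          rw [Matrix.fromBlocks_multiply]
          simp only [Matrix.zero_mul, Matrix.mul_zero, add_zero, zero_add,
            Matrix.toBlocks_fromBlocks₁₁, Matrix.toBlocks_fromBlocks₁₂,
            Matrix.toBlocks_fromBlocks₂₁, Matrix.toBlocks_fromBlocks₂₂]
        have htrblocks : Matrix.trace (R ^ 3) = μ ^ 3 + Matrix.trace (R.toBlocks₂₂ ^ 3) := by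
          rw [hRcube]
          have h7 : Matrix.trace (Matrix.fromBlocks
              (R.toBlocks₁₁ * (R.toBlocks₁₁ * R.toBlocks₁₁))
              (R.toBlocks₁₁ * (R.toBlocks₁₁ * R.toBlocks₁₂ + R.toBlocks₁₂ * R.toBlocks₂₂)
                + R.toBlocks₁₂ * (R.toBlocks₂₂ * R.toBlocks₂₂)) 0
              (R.toBlocks₂₂ * (R.toBlocks₂₂ * R.toBlocks₂₂)))
              = Matrix.trace (R.toBlocks₁₁ * (R.toBlocks₁₁ * R.toBlocks₁₁))
                + Matrix.trace (R.toBlocks₂₂ * (R.toBlocks₂₂ * R.toBlocks₂₂)) := by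
            simp only [Matrix.trace, Matrix.diag]
            rw [Fintype.sum_sum_type]
            rfl
          rw [h7, hA11]
          congr 1
          · have h8 : (μ • (1 : Matrix {x // x = j} {x // x = j} ℂ))
                * ((μ • 1) * (μ • 1)) = μ ^ 3 • (1 : Matrix {x // x = j} {x // x = j} ℂ) := by
              simp [smul_smul]
              ring_nf
            rw [h8, Matrix.trace_smul, Matrix.trace_one]
            simp
          · rw [← pow_two, ← pow_succ']
        rw [← htrN, ← htrR, htrblocks]
      -- apply induction hypothesis
      have hcard2 : Fintype.card {x // ¬ x = j} = N - 1 := by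
        rw [Fintype.card_subtype_compl, Fintype.card_subtype_eq, hcard]
      have hNpos : 0 < N := by
        rw [← hcard]; exact Fintype.card_pos
      have hih := ih (N - 1) (by omega) {x // ¬ x = j} hcard2 R.toBlocks₂₂
      -- combine
      rw [htr, hih, hcpM, Polynomial.roots_mul, Polynomial.roots_X_sub_C]
      · simp
      · exact mul_ne_zero (Polynomial.X_sub_C_ne_zero μ) (Matrix.charpoly_monic _).ne_zero


/-- Upper bound on σ₃ of a tournament matrix in terms of its normalized spectral
radius ρ. -/
theorem stmt_11 (n : ℕ) (hn : 0 < n) (A : Matrix (Fin n) (Fin n) ℝ)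
    (hA0 : ∀ i j, 0 ≤ A i j)
    (hAT : A + A.transpose = Matrix.of fun _ _ => (1 : ℝ))
    (μ : Fin n → ℂ)
    (hμ : (A.map (Complex.ofReal : ℝ → ℂ)).charpoly.roots
        = Multiset.map μ Finset.univ.val)
    (ρ : ℝ)
    (hρub : ∀ i, ‖μ i‖ ≤ ρ * n)
    (hρmax : ∃ i, ‖μ i‖ = ρ * n) :
    (0 < ρ ∧ ρ ≤ 1/2) ∧
    Matrix.trace (A ^ 3) / (n : ℝ) ^ 3
      ≤ ((⌊ρ⁻¹ / 2⌋ : ℤ) : ℝ) * ρ ^ 3 + (1/2 - ((⌊ρ⁻¹ / 2⌋ : ℤ) : ℝ) * ρ) ^ 3 := by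
  have hnpos : (0:ℝ) < n := by exact_mod_cast hn
  have hentry : ∀ i j, A i j + A j i = 1 := by
    intro i j
    have := congrFun (congrFun hAT i) j
    simpa [Matrix.transpose_apply] using this
  set B : Matrix (Fin n) (Fin n) ℂ := A.map (Complex.ofReal : ℝ → ℂ) with hB
  -- each μ i is an eigenvalue
  have hroot : ∀ i, B.charpoly.IsRoot (μ i) := by
    intro i
    have hmem : μ i ∈ B.charpoly.roots := by
      rw [hμ]
      exact Multiset.mem_map.2 ⟨i, Finset.mem_univ i, rfl⟩
    exact (Polynomial.mem_roots (Matrix.charpoly_monic B).ne_zero).1 hmem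
  have hbounds : ∀ i, 0 ≤ (μ i).re ∧ ‖μ i‖ ≤ n / 2 := by
    intro i
    obtain ⟨v, hv0, hveq⟩ := exists_eigenvec B (hroot i)
    exact eig_bounds A hA0 hentry hv0 hveq
  -- trace identities
  have htrA : Matrix.trace A = n / 2 := by
    have hdiag : ∀ i, A i i = 1 / 2 := fun i => by have := hentry i i; linarith
    simp only [Matrix.trace, Matrix.diag]
    rw [Finset.sum_congr rfl fun i _ => hdiag i]
    simp [Finset.card_univ]
    ring
  have htrB : ∑ i, μ i = ((n : ℂ) / 2) := by
    have h1 : Matrix.trace B = (B.charpoly.roots).sum := Matrix.trace_eq_sum_roots_charpoly B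
    have h2 : (B.charpoly.roots).sum = ∑ i, μ i := by
      rw [hμ]
      rfl
    have h3 : Matrix.trace B = ((Matrix.trace A : ℝ) : ℂ) := by
      simp only [hB, Matrix.trace, Matrix.diag, Matrix.map_apply]
      rw [Complex.ofReal_sum]
    rw [h3, htrA] at h1
    rw [← h2, ← h1]
    push_cast
    ring
  have hsumre : ∑ i, (μ i).re = (n : ℝ) / 2 := by
    have := congrArg Complex.re htrB
    rw [Complex.re_sum] at this
    simpa using this
  -- positivity of ρ
  have hρpos : 0 < ρ := by
    by_contra h
    push_neg at h
    have hle : ∀ i, (μ i).re ≤ 0 := by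
      intro i
      have h1 : (μ i).re ≤ ‖μ i‖ := Complex.re_le_norm _
      have h2 : ‖μ i‖ ≤ ρ * n := hρub i
      nlinarith [hnpos]
    have : ∑ i, (μ i).re ≤ 0 := Finset.sum_nonpos fun i _ => hle i
    rw [hsumre] at this
    have : (0:ℝ) < (n:ℝ) / 2 := by positivity
    linarith
  have hρhalf : ρ ≤ 1 / 2 := by
    obtain ⟨i, hi⟩ := hρmax
    have := (hbounds i).2
    rw [hi] at this
    nlinarith
  refine ⟨⟨hρpos, hρhalf⟩, ?_⟩
  -- trace of cube
  have htr3 : ((Matrix.trace (A ^ 3) : ℝ) : ℂ) = ∑ i, μ i ^ 3 := by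
    have h1 : Matrix.trace (B ^ 3) = (B.charpoly.roots.map (fun z => z ^ 3)).sum :=
      trace_cube_key n (Fin n) (Fintype.card_fin n) B
    have h2 : (B.charpoly.roots.map (fun z => z ^ 3)).sum = ∑ i, μ i ^ 3 := by
      rw [hμ, Multiset.map_map]
      rfl
    have h3 : B ^ 3 = (A ^ 3).map (Complex.ofReal : ℝ → ℂ) := by
      have e1 : B = Complex.ofRealHom.mapMatrix A := rfl
      have e2 : (A ^ 3).map (Complex.ofReal : ℝ → ℂ)
          = Complex.ofRealHom.mapMatrix (A ^ 3) := rfl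
      rw [e1, e2, map_pow]
    have h4 : Matrix.trace ((A ^ 3).map (Complex.ofReal : ℝ → ℂ))
        = ((Matrix.trace (A ^ 3) : ℝ) : ℂ) := by
      simp only [Matrix.trace, Matrix.diag, Matrix.map_apply]
      rw [Complex.ofReal_sum]
    rw [← h4, ← h3, h1, h2]
  have htr3re : Matrix.trace (A ^ 3) = ∑ i, (μ i ^ 3).re := by
    have := congrArg Complex.re htr3
    rw [Complex.re_sum] at this
    simpa using this
  -- bound re of cube
  have hcubere : ∀ i, (μ i ^ 3).re ≤ (μ i).re ^ 3 := by
    intro i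
    have h1 : (μ i ^ 3).re = (μ i).re ^ 3 - 3 * (μ i).re * (μ i).im ^ 2 := by
      have : μ i ^ 3 = μ i * μ i * μ i := by ring
      rw [this]
      simp [Complex.mul_re, Complex.mul_im]
      ring
    rw [h1]
    nlinarith [(hbounds i).1, sq_nonneg (μ i).im]
  -- set up y
  set y : Fin n → ℝ := fun i => (μ i).re / n with hy
  have hybounds : ∀ i ∈ Finset.univ, 0 ≤ y i ∧ y i ≤ ρ := by
    intro i _
    constructor
    · exact div_nonneg (hbounds i).1 hnpos.le
    · rw [hy, div_le_iff₀ hnpos]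
      calc (μ i).re ≤ ‖μ i‖ := Complex.re_le_norm _
        _ ≤ ρ * n := hρub i
  have hysum : ∑ i, y i = 1 / 2 := by
    rw [hy, ← Finset.sum_div, hsumre]
    field_simp
  have hfinal := cube_sum_bound hρpos Finset.univ y hybounds hysum
  refine le_trans ?_ hfinal
  have h5 : ∑ i, y i ^ 3 = (∑ i, (μ i).re ^ 3) / (n:ℝ)^3 := by
    rw [Finset.sum_div]
    exact Finset.sum_congr rfl fun i _ => by rw [hy, div_pow]
  rw [htr3re, h5]
  exact (div_le_div_iff_of_pos_right (by positivity)).2 (Finset.sum_le_sum fun i _ => hcubere i)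
end

section
/- Let U be a tournament limit. Then t(C₃,U) = 1/2 − (3/2)·∫₀¹ (∫₀¹ U(x,y) dy)² dx. -/
open MeasureTheory

/-- The density of the directed triangle C₃ in a tournament limit. -/
noncomputable def cycle3Density (W : ℝ → ℝ → ℝ) : ℝ :=
  ∫ x in Set.Icc (0:ℝ) 1, ∫ y in Set.Icc (0:ℝ) 1, ∫ z in Set.Icc (0:ℝ) 1,
    W x y * W y z * W z x

namespace Stmt12Aux

open Set

/-- Lebesgue measure restricted to `[0,1]`. -/
noncomputable def m : Measure ℝ := volume.restrict (Set.Icc (0:ℝ) 1)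

instance : IsProbabilityMeasure m := by
  constructor
  rw [m, Measure.restrict_apply_univ, Real.volume_Icc]
  norm_num

/-- The triple product measure. -/
noncomputable def π3 : Measure (ℝ × ℝ × ℝ) := m.prod (m.prod m)

instance : IsProbabilityMeasure π3 := by
  rw [π3]; infer_instance

instance : SFinite m := by infer_instance

lemma ae_mem_I : ∀ᵐ x ∂m, x ∈ Set.Icc (0:ℝ) 1 := by
  rw [m]; exact ae_restrict_mem measurableSet_Icc

lemma ae_box2 : ∀ᵐ p : ℝ × ℝ ∂(m.prod m),
    p.1 ∈ Set.Icc (0:ℝ) 1 ∧ p.2 ∈ Set.Icc (0:ℝ) 1 := by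
  rw [m, Measure.prod_restrict]
  filter_upwards [ae_restrict_mem (measurableSet_Icc.prod measurableSet_Icc)] with p hp
  exact hp

lemma ae_box3 : ∀ᵐ p : ℝ × ℝ × ℝ ∂π3,
    p.1 ∈ Set.Icc (0:ℝ) 1 ∧ p.2.1 ∈ Set.Icc (0:ℝ) 1 ∧ p.2.2 ∈ Set.Icc (0:ℝ) 1 := by
  rw [π3, m, Measure.prod_restrict, Measure.prod_restrict]
  filter_upwards [ae_restrict_mem (measurableSet_Icc.prod
    (measurableSet_Icc.prod measurableSet_Icc))] with p hp
  exact ⟨hp.1, hp.2.1, hp.2.2⟩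

lemma integrable1 {f : ℝ → ℝ} (hf : AEStronglyMeasurable f m)
    (hb : ∀ x ∈ Set.Icc (0:ℝ) 1, ‖f x‖ ≤ 1) : Integrable f m := by
  refine Integrable.mono' (integrable_const 1) hf ?_
  filter_upwards [ae_mem_I] with x hx using hb x hx

lemma integrable2 {f : ℝ × ℝ → ℝ} (hf : AEStronglyMeasurable f (m.prod m))
    (hb : ∀ p : ℝ × ℝ, p.1 ∈ Set.Icc (0:ℝ) 1 → p.2 ∈ Set.Icc (0:ℝ) 1 → ‖f p‖ ≤ 1) :
    Integrable f (m.prod m) := by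
  refine Integrable.mono' (integrable_const 1) hf ?_
  filter_upwards [ae_box2] with p hp using hb p hp.1 hp.2

lemma integrable3 {f : ℝ × ℝ × ℝ → ℝ} (hf : AEStronglyMeasurable f π3)
    (hb : ∀ p : ℝ × ℝ × ℝ, p.1 ∈ Set.Icc (0:ℝ) 1 → p.2.1 ∈ Set.Icc (0:ℝ) 1 →
      p.2.2 ∈ Set.Icc (0:ℝ) 1 → ‖f p‖ ≤ 1) : Integrable f π3 := by
  refine Integrable.mono' (integrable_const 1) hf ?_
  filter_upwards [ae_box3] with p hp using hb p hp.1 hp.2.1 hp.2.2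

lemma norm_mul2_le {a b : ℝ} (ha : a ∈ Set.Icc (0:ℝ) 1) (hb : b ∈ Set.Icc (0:ℝ) 1) :
    ‖a * b‖ ≤ 1 := by
  rw [Real.norm_eq_abs, abs_of_nonneg (mul_nonneg ha.1 hb.1)]
  nlinarith [ha.1, ha.2, hb.1, hb.2]

lemma norm_mul3_le {a b c : ℝ} (ha : a ∈ Set.Icc (0:ℝ) 1) (hb : b ∈ Set.Icc (0:ℝ) 1)
    (hc : c ∈ Set.Icc (0:ℝ) 1) : ‖a * b * c‖ ≤ 1 := by
  rw [Real.norm_eq_abs, abs_of_nonneg (mul_nonneg (mul_nonneg ha.1 hb.1) hc.1)]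
  exact mul_le_one₀ (mul_le_one₀ ha.2 hb.1 hb.2) hc.1 hc.2

/-- Turn a triple iterated integral into an integral over the product measure. -/
lemma triple_eq {f : ℝ × ℝ × ℝ → ℝ} (hf : Integrable f π3) :
    ∫ x, ∫ y, ∫ z, f (x, y, z) ∂m ∂m ∂m = ∫ p, f p ∂π3 := by
  have hf' : Integrable f (m.prod (m.prod m)) := by rwa [π3] at hf
  rw [π3, integral_prod _ hf']
  refine integral_congr_ae ?_
  filter_upwards [hf'.prod_right_ae] with x hx
  rw [integral_prod _ hx]

section Main

variable {U : ℝ → ℝ → ℝ}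

lemma d_meas (hmeas : Measurable (Function.uncurry U)) :
    StronglyMeasurable fun x => ∫ y, U x y ∂m :=
  hmeas.stronglyMeasurable.integral_prod_right'

lemma d_bound (hrange : ∀ x ∈ Set.Icc (0:ℝ) 1, ∀ y ∈ Set.Icc (0:ℝ) 1,
    U x y ∈ Set.Icc (0:ℝ) 1) :
    ∀ x ∈ Set.Icc (0:ℝ) 1, ‖∫ y, U x y ∂m‖ ≤ 1 := by
  intro x hx
  have h : ∀ᵐ y ∂m, ‖U x y‖ ≤ 1 := by
    filter_upwards [ae_mem_I] with y hy
    have h2 := hrange x hx y hy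
    rw [Real.norm_eq_abs, abs_le]
    exact ⟨by linarith [h2.1], h2.2⟩
  calc ‖∫ y, U x y ∂m‖ ≤ 1 * (m Set.univ).toReal := norm_integral_le_of_norm_le_const h
    _ = 1 := by simp

lemma d_int (hmeas : Measurable (Function.uncurry U))
    (hrange : ∀ x ∈ Set.Icc (0:ℝ) 1, ∀ y ∈ Set.Icc (0:ℝ) 1, U x y ∈ Set.Icc (0:ℝ) 1) :
    Integrable (fun x => ∫ y, U x y ∂m) m :=
  integrable1 (d_meas hmeas).aestronglyMeasurable (d_bound hrange)

lemma d2_int (hmeas : Measurable (Function.uncurry U))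
    (hrange : ∀ x ∈ Set.Icc (0:ℝ) 1, ∀ y ∈ Set.Icc (0:ℝ) 1, U x y ∈ Set.Icc (0:ℝ) 1) :
    Integrable (fun x => (∫ y, U x y ∂m) * (∫ y, U x y ∂m)) m := by
  refine integrable1 ((d_meas hmeas).mul (d_meas hmeas)).aestronglyMeasurable ?_
  intro x hx
  have h := d_bound hrange x hx
  calc ‖(∫ y, U x y ∂m) * (∫ y, U x y ∂m)‖
      = ‖∫ y, U x y ∂m‖ * ‖∫ y, U x y ∂m‖ := norm_mul _ _
    _ ≤ 1 * 1 := by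
        exact mul_le_mul h h (norm_nonneg _) zero_le_one
    _ = 1 := one_mul 1

lemma sect_right (hmeas : Measurable (Function.uncurry U))
    (hrange : ∀ x ∈ Set.Icc (0:ℝ) 1, ∀ y ∈ Set.Icc (0:ℝ) 1, U x y ∈ Set.Icc (0:ℝ) 1)
    {y : ℝ} (hy : y ∈ Set.Icc (0:ℝ) 1) : Integrable (fun x => U y x) m := by
  refine integrable1 ?_ ?_
  · exact (hmeas.comp (measurable_const.prodMk measurable_id)).aestronglyMeasurable
  · intro x hx
    have h2 := hrange y hy x hx
    rw [Real.norm_eq_abs, abs_le]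
    exact ⟨by linarith [h2.1], h2.2⟩

lemma sect_left (hmeas : Measurable (Function.uncurry U))
    (hrange : ∀ x ∈ Set.Icc (0:ℝ) 1, ∀ y ∈ Set.Icc (0:ℝ) 1, U x y ∈ Set.Icc (0:ℝ) 1)
    {y : ℝ} (hy : y ∈ Set.Icc (0:ℝ) 1) : Integrable (fun x => U x y) m := by
  refine integrable1 ?_ ?_
  · exact (hmeas.comp (measurable_id.prodMk measurable_const)).aestronglyMeasurable
  · intro x hx
    have h2 := hrange x hx y hy
    rw [Real.norm_eq_abs, abs_le]
    exact ⟨by linarith [h2.1], h2.2⟩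

/-- Column sums: ∫ x, U x y dx = 1 - ∫ z, U y z dz for y in [0,1]. -/
lemma colsum (hmeas : Measurable (Function.uncurry U))
    (hrange : ∀ x ∈ Set.Icc (0:ℝ) 1, ∀ y ∈ Set.Icc (0:ℝ) 1, U x y ∈ Set.Icc (0:ℝ) 1)
    (hsym : ∀ x ∈ Set.Icc (0:ℝ) 1, ∀ y ∈ Set.Icc (0:ℝ) 1, U x y + U y x = 1)
    {y : ℝ} (hy : y ∈ Set.Icc (0:ℝ) 1) :
    ∫ x, U x y ∂m = 1 - ∫ z, U y z ∂m := by
  have h1 : ∫ x, U x y ∂m = ∫ x, ((1:ℝ) - U y x) ∂m := by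
    refine integral_congr_ae ?_
    filter_upwards [ae_mem_I] with x hx
    linarith [hsym x hx y hy]
  rw [h1, integral_sub (integrable_const 1) (sect_right hmeas hrange hy), integral_const]
  simp

/-- The uncurried kernel is integrable on the product. -/
lemma U_int2 (hmeas : Measurable (Function.uncurry U))
    (hrange : ∀ x ∈ Set.Icc (0:ℝ) 1, ∀ y ∈ Set.Icc (0:ℝ) 1, U x y ∈ Set.Icc (0:ℝ) 1) :
    Integrable (Function.uncurry U) (m.prod m) := by
  refine integrable2 hmeas.aestronglyMeasurable ?_
  intro p hp1 hp2
  have h2 := hrange p.1 hp1 p.2 hp2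
  rw [Function.uncurry, Real.norm_eq_abs, abs_le]
  exact ⟨by linarith [h2.1], h2.2⟩

/-- D = ∫ d = 1/2. -/
lemma D_half (hmeas : Measurable (Function.uncurry U))
    (hrange : ∀ x ∈ Set.Icc (0:ℝ) 1, ∀ y ∈ Set.Icc (0:ℝ) 1, U x y ∈ Set.Icc (0:ℝ) 1)
    (hsym : ∀ x ∈ Set.Icc (0:ℝ) 1, ∀ y ∈ Set.Icc (0:ℝ) 1, U x y + U y x = 1) :
    ∫ x, (∫ y, U x y ∂m) ∂m = 1/2 := by
  have h1 : ∫ x, ∫ y, U x y ∂m ∂m = ∫ y, ∫ x, U x y ∂m ∂m :=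
    integral_integral_swap (U_int2 hmeas hrange)
  have h2 : ∫ y, ∫ x, U x y ∂m ∂m = ∫ y, ((1:ℝ) - ∫ z, U y z ∂m) ∂m := by
    refine integral_congr_ae ?_
    filter_upwards [ae_mem_I] with y hy
    exact colsum hmeas hrange hsym hy
  have h3 : ∫ y, ((1:ℝ) - ∫ z, U y z ∂m) ∂m = 1 - ∫ y, (∫ z, U y z ∂m) ∂m := by
    rw [integral_sub (integrable_const 1) (d_int hmeas hrange), integral_const]
    simp
  linarith [h1.trans (h2.trans h3)]


lemma d_mem (hmeas : Measurable (Function.uncurry U))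
    (hrange : ∀ x ∈ Set.Icc (0:ℝ) 1, ∀ y ∈ Set.Icc (0:ℝ) 1, U x y ∈ Set.Icc (0:ℝ) 1) :
    ∀ x ∈ Set.Icc (0:ℝ) 1, (∫ y, U x y ∂m) ∈ Set.Icc (0:ℝ) 1 := by
  intro x hx
  constructor
  · refine integral_nonneg_of_ae ?_
    filter_upwards [ae_mem_I] with y hy using (hrange x hx y hy).1
  · have := d_bound hrange x hx
    rw [Real.norm_eq_abs] at this
    exact le_of_abs_le this

lemma main (hmeas : Measurable (Function.uncurry U))
    (hrange : ∀ x ∈ Set.Icc (0:ℝ) 1, ∀ y ∈ Set.Icc (0:ℝ) 1, U x y ∈ Set.Icc (0:ℝ) 1)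
    (hsym : ∀ x ∈ Set.Icc (0:ℝ) 1, ∀ y ∈ Set.Icc (0:ℝ) 1, U x y + U y x = 1) :
    (∫ x, ∫ y, ∫ z, U x y * U y z * U z x ∂m ∂m ∂m)
      = 1/2 - 3/2 * ∫ x, (∫ y, U x y ∂m) ^ 2 ∂m := by
  -- measurability of the various coordinate compositions
  have hm1 : Measurable fun p : ℝ × ℝ × ℝ => U p.1 p.2.1 :=
    hmeas.comp (measurable_fst.prodMk (measurable_fst.comp measurable_snd))
  have hm2 : Measurable fun p : ℝ × ℝ × ℝ => U p.2.1 p.2.2 :=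
    hmeas.comp ((measurable_fst.comp measurable_snd).prodMk
      (measurable_snd.comp measurable_snd))
  have hm3 : Measurable fun p : ℝ × ℝ × ℝ => U p.2.2 p.1 :=
    hmeas.comp ((measurable_snd.comp measurable_snd).prodMk measurable_fst)
  have hm4 : Measurable fun p : ℝ × ℝ × ℝ => U p.1 p.2.2 :=
    hmeas.comp (measurable_fst.prodMk (measurable_snd.comp measurable_snd))
  have hm5 : Measurable fun p : ℝ × ℝ × ℝ => U p.2.2 p.2.1 :=
    hmeas.comp ((measurable_snd.comp measurable_snd).prodMk
      (measurable_fst.comp measurable_snd))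
  -- integrabilities
  have intT : Integrable (fun p : ℝ × ℝ × ℝ =>
      U p.1 p.2.1 * U p.2.1 p.2.2 * U p.2.2 p.1) π3 := by
    refine integrable3 ((hm1.mul hm2).mul hm3).aestronglyMeasurable ?_
    intro p h1 h2 h3
    exact norm_mul3_le (hrange _ h1 _ h2) (hrange _ h2 _ h3) (hrange _ h3 _ h1)
  have intA : Integrable (fun p : ℝ × ℝ × ℝ => U p.1 p.2.1 * U p.2.1 p.2.2) π3 := by
    refine integrable3 (hm1.mul hm2).aestronglyMeasurable ?_
    intro p h1 h2 h3
    exact norm_mul2_le (hrange _ h1 _ h2) (hrange _ h2 _ h3)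
  have intS : Integrable (fun p : ℝ × ℝ × ℝ =>
      U p.1 p.2.1 * U p.2.1 p.2.2 * U p.1 p.2.2) π3 := by
    refine integrable3 ((hm1.mul hm2).mul hm4).aestronglyMeasurable ?_
    intro p h1 h2 h3
    exact norm_mul3_le (hrange _ h1 _ h2) (hrange _ h2 _ h3) (hrange _ h1 _ h3)
  have intS' : Integrable (fun p : ℝ × ℝ × ℝ =>
      U p.1 p.2.1 * U p.2.2 p.2.1 * U p.1 p.2.2) π3 := by
    refine integrable3 ((hm1.mul hm5).mul hm4).aestronglyMeasurable ?_
    intro p h1 h2 h3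
    exact norm_mul3_le (hrange _ h1 _ h2) (hrange _ h3 _ h2) (hrange _ h1 _ h3)
  have intQ : Integrable (fun p : ℝ × ℝ × ℝ => U p.1 p.2.1 * U p.1 p.2.2) π3 := by
    refine integrable3 (hm1.mul hm4).aestronglyMeasurable ?_
    intro p h1 h2 h3
    exact norm_mul2_le (hrange _ h1 _ h2) (hrange _ h1 _ h3)
  -- abbreviation for ∫ d·d
  set P : ℝ := ∫ x, (∫ y, U x y ∂m) * (∫ y, U x y ∂m) ∂m with hP
  -- Value of A := ∫ U x y · U y z
  have hA : ∫ p : ℝ × ℝ × ℝ, U p.1 p.2.1 * U p.2.1 p.2.2 ∂π3 = 1/2 - P := by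
    rw [← triple_eq intA]
    have e1 : ∀ x y : ℝ, ∫ z, U x y * U y z ∂m = U x y * ∫ z, U y z ∂m :=
      fun x y => integral_const_mul _ _
    simp only [e1]
    have hint2 : Integrable (Function.uncurry fun x y : ℝ =>
        U x y * ∫ z, U y z ∂m) (m.prod m) := by
      refine integrable2 ?_ ?_
      · exact (hmeas.stronglyMeasurable.mul
          ((d_meas hmeas).comp_measurable measurable_snd)).aestronglyMeasurable
      · intro p h1 h2
        exact norm_mul2_le (hrange _ h1 _ h2) (d_mem hmeas hrange _ h2)
    rw [integral_integral_swap hint2]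
    have e2 : ∀ y : ℝ, ∫ x, U x y * ∫ z, U y z ∂m ∂m
        = (∫ x, U x y ∂m) * ∫ z, U y z ∂m := fun y => integral_mul_const _ _
    simp only [e2]
    have e3 : ∫ y, (∫ x, U x y ∂m) * ∫ z, U y z ∂m ∂m
        = ∫ y, ((∫ z, U y z ∂m) - (∫ z, U y z ∂m) * (∫ z, U y z ∂m)) ∂m := by
      refine integral_congr_ae ?_
      filter_upwards [ae_mem_I] with y hy
      rw [colsum hmeas hrange hsym hy]
      ring
    rw [e3, integral_sub (d_int hmeas hrange) (d2_int hmeas hrange),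
      D_half hmeas hrange hsym]
  -- Value of Q := ∫ U x y · U x z
  have hQ : ∫ p : ℝ × ℝ × ℝ, U p.1 p.2.1 * U p.1 p.2.2 ∂π3 = P := by
    rw [← triple_eq intQ]
    have e1 : ∀ x y : ℝ, ∫ z, U x y * U x z ∂m = U x y * ∫ z, U x z ∂m :=
      fun x y => integral_const_mul _ _
    simp only [e1]
    have e2 : ∀ x : ℝ, ∫ y, U x y * ∫ z, U x z ∂m ∂m
        = (∫ y, U x y ∂m) * ∫ z, U x z ∂m := fun x => integral_mul_const _ _
    simp only [e2]
    rfl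
  -- the coordinate permutation (x,y,z) ↦ (x,z,y)
  have hgmeas : Measurable fun p : ℝ × ℝ × ℝ => (p.1, p.2.2, p.2.1) :=
    measurable_fst.prodMk ((measurable_snd.comp measurable_snd).prodMk
      (measurable_fst.comp measurable_snd))
  have hmp : MeasurePreserving (fun p : ℝ × ℝ × ℝ => (p.1, p.2.2, p.2.1)) π3 π3 := by
    have h := (MeasurePreserving.id m).prod
      (MeasureTheory.Measure.measurePreserving_swap (μ := m) (ν := m))
    rw [π3]
    exact h
  -- S' = S
  have hSS' : ∫ p : ℝ × ℝ × ℝ, U p.1 p.2.1 * U p.2.2 p.2.1 * U p.1 p.2.2 ∂π3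
      = ∫ p : ℝ × ℝ × ℝ, U p.1 p.2.1 * U p.2.1 p.2.2 * U p.1 p.2.2 ∂π3 := by
    have h1 : ∫ p : ℝ × ℝ × ℝ, U p.1 p.2.1 * U p.2.2 p.2.1 * U p.1 p.2.2 ∂π3
        = ∫ p : ℝ × ℝ × ℝ,
            (fun q : ℝ × ℝ × ℝ => U q.1 q.2.1 * U q.2.1 q.2.2 * U q.1 q.2.2)
              ((fun p : ℝ × ℝ × ℝ => (p.1, p.2.2, p.2.1)) p) ∂π3 := by
      refine integral_congr_ae (Filter.Eventually.of_forall fun p => ?_)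
      simp only
      ring
    have h2 := integral_map (f := fun q : ℝ × ℝ × ℝ =>
        U q.1 q.2.1 * U q.2.1 q.2.2 * U q.1 q.2.2) hgmeas.aemeasurable
      (by rw [hmp.map_eq]; exact intS.aestronglyMeasurable)
    rw [h1, ← h2, hmp.map_eq]
  -- S = Q - S'
  have hSsplit : ∫ p : ℝ × ℝ × ℝ, U p.1 p.2.1 * U p.2.1 p.2.2 * U p.1 p.2.2 ∂π3
      = (∫ p : ℝ × ℝ × ℝ, U p.1 p.2.1 * U p.1 p.2.2 ∂π3)
        - ∫ p : ℝ × ℝ × ℝ, U p.1 p.2.1 * U p.2.2 p.2.1 * U p.1 p.2.2 ∂π3 := by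
    rw [← integral_sub intQ intS']
    refine integral_congr_ae ?_
    filter_upwards [ae_box3] with p hp
    have h := hsym p.2.1 hp.2.1 p.2.2 hp.2.2
    have : U p.2.1 p.2.2 = 1 - U p.2.2 p.2.1 := by linarith
    rw [this]; ring
  have hS : ∫ p : ℝ × ℝ × ℝ, U p.1 p.2.1 * U p.2.1 p.2.2 * U p.1 p.2.2 ∂π3
      = P / 2 := by
    rw [hSS'] at hSsplit
    rw [hQ] at hSsplit
    linarith
  -- T = A - S
  have hTsplit : ∫ p : ℝ × ℝ × ℝ, U p.1 p.2.1 * U p.2.1 p.2.2 * U p.2.2 p.1 ∂π3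
      = (∫ p : ℝ × ℝ × ℝ, U p.1 p.2.1 * U p.2.1 p.2.2 ∂π3)
        - ∫ p : ℝ × ℝ × ℝ, U p.1 p.2.1 * U p.2.1 p.2.2 * U p.1 p.2.2 ∂π3 := by
    rw [← integral_sub intA intS]
    refine integral_congr_ae ?_
    filter_upwards [ae_box3] with p hp
    have h := hsym p.1 hp.1 p.2.2 hp.2.2
    have : U p.2.2 p.1 = 1 - U p.1 p.2.2 := by linarith
    rw [this]; ring
  have hfinal : ∫ x, ∫ y, ∫ z, U x y * U y z * U z x ∂m ∂m ∂m = 1/2 - 3/2 * P := by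
    rw [triple_eq intT, hTsplit, hA, hS]
    ring
  rw [hfinal]
  have : ∫ x, (∫ y, U x y ∂m) ^ 2 ∂m = P := by
    rw [hP]
    simp only [pow_two]
  rw [this]

end Main

end Stmt12Aux

/-- The identity t(C₃,U) = 1/2 − (3/2)·∫ (∫ U(x,y) dy)² dx for tournament limits. -/
theorem stmt_12 (U : ℝ → ℝ → ℝ)
    (hmeas : Measurable (Function.uncurry U))
    (hrange : ∀ x ∈ Set.Icc (0:ℝ) 1, ∀ y ∈ Set.Icc (0:ℝ) 1, U x y ∈ Set.Icc (0:ℝ) 1)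
    (hsym : ∀ x ∈ Set.Icc (0:ℝ) 1, ∀ y ∈ Set.Icc (0:ℝ) 1, U x y + U y x = 1) :
    cycle3Density U
      = 1/2 - 3/2 * ∫ x in Set.Icc (0:ℝ) 1, (∫ y in Set.Icc (0:ℝ) 1, U x y) ^ 2 := by
  have h := Stmt12Aux.main hmeas hrange hsym
  rw [cycle3Density]
  exact h
end

section
/- Let W be a tournament limit, let n be a positive integer, and let Z₁,…,Zₙ be a partition of [0,1] into measurable sets each of Lebesgue measure 1/n. Define the step function W' : [0,1]² → [0,1] by W'(x,y) = n²·∫_{Zᵢ×Zⱼ} W(x',y') dx' dy' whenever (x,y) ∈ Zᵢ×Zⱼ. Then t(C₃,W) ≤ t(C₃,W'). -/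
open MeasureTheory

local notation "I01" => Set.Icc (0:ℝ) 1

namespace TL13

lemma bdd_int {α : Type*} [MeasurableSpace α] {μ : Measure α} [IsFiniteMeasure μ]
    {f : α → ℝ} {C : ℝ} (hf : AEStronglyMeasurable f μ) (hb : ∀ x, |f x| ≤ C) :
    Integrable f μ :=
  (integrable_const C).mono' hf (Filter.Eventually.of_forall fun x => by
    simpa [Real.norm_eq_abs] using hb x)

instance : IsProbabilityMeasure (volume.restrict I01) :=
  ⟨by simp [Measure.restrict_apply_univ, Real.volume_Icc]⟩

lemma habs_mul {a b : ℝ} (ha : |a| ≤ 1) (hb : |b| ≤ 1) : |a * b| ≤ 1 := by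
  rw [abs_mul]; exact mul_le_one₀ ha (abs_nonneg _) hb

theorem tri_formula (V : ℝ → ℝ → ℝ) (hm : Measurable (Function.uncurry V))
    (hr : ∀ x y, V x y ∈ Set.Icc (0:ℝ) 1) (hs : ∀ x y, V x y + V y x = 1) :
    (∫ x in I01, ∫ y in I01, ∫ z in I01, V x y * V y z * V z x)
      = 1/2 - 3/2 * ∫ x in I01, (∫ y in I01, V x y)^2 := by
  have hV0 : ∀ x y, 0 ≤ V x y := fun x y => (hr x y).1
  have hV1 : ∀ x y, V x y ≤ 1 := fun x y => (hr x y).2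
  have hVa : ∀ x y, |V x y| ≤ 1 := fun x y => abs_le.2 ⟨by linarith [hV0 x y], hV1 x y⟩
  have hflip : ∀ x y, V y x = 1 - V x y := fun x y => by linarith [hs x y]
  have hmL : ∀ x, Measurable (V x) := fun x => hm.of_uncurry_left
  have hmR : ∀ y, Measurable (fun x => V x y) := fun y => hm.of_uncurry_right
  have ib : ∀ (f : ℝ → ℝ), Measurable f → (∀ x, |f x| ≤ 1) →
      Integrable f (volume.restrict I01) :=
    fun f h1 h2 => bdd_int h1.aestronglyMeasurable h2
  have int_one : (∫ (_x : ℝ) in I01, (1:ℝ)) = 1 := by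
    simp [Real.volume_Icc]
  have ibnd : ∀ (f : ℝ → ℝ), (∀ x, |f x| ≤ 1) → |∫ x in I01, f x| ≤ 1 := by
    intro f hb
    have h := norm_integral_le_of_norm_le_const (μ := volume.restrict I01) (f := f) (C := 1)
      (Filter.Eventually.of_forall fun x => by simpa using hb x)
    simpa using h
  have dmes : Measurable (fun x => ∫ y in I01, V x y) :=
    (hm.stronglyMeasurable.integral_prod_right (ν := volume.restrict I01)).measurable
  have d0 : ∀ x, 0 ≤ ∫ y in I01, V x y := fun x => integral_nonneg fun y => hV0 x y
  have d1 : ∀ x, (∫ y in I01, V x y) ≤ 1 := by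
    intro x
    calc (∫ y in I01, V x y) ≤ ∫ (_y : ℝ) in I01, (1:ℝ) :=
          integral_mono (ib _ (hmL x) (fun y => hVa x y)) (integrable_const 1)
            (fun y => hV1 x y)
      _ = 1 := int_one
  have da : ∀ x, |∫ y in I01, V x y| ≤ 1 := fun x => abs_le.2 ⟨by linarith [d0 x], d1 x⟩
  have col : ∀ y, (∫ x in I01, V x y) = 1 - ∫ z in I01, V y z := by
    intro y
    rw [show (fun x => V x y) = fun x => 1 - V y x from funext fun x => hflip y x]
    rw [integral_sub (integrable_const 1) (ib _ (hmL y) (fun z => hVa y z)), int_one]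
  have ib2 : ∀ (F : ℝ → ℝ → ℝ), Measurable (Function.uncurry F) → (∀ x y, |F x y| ≤ 1) →
      Integrable (Function.uncurry F) ((volume.restrict I01).prod (volume.restrict I01)) :=
    fun F h1 h2 => bdd_int h1.aestronglyMeasurable (fun p => h2 p.1 p.2)
  have dswap : ∀ (F : ℝ → ℝ → ℝ), Measurable (Function.uncurry F) → (∀ x y, |F x y| ≤ 1) →
      (∫ x in I01, ∫ y in I01, F x y) = ∫ y in I01, ∫ x in I01, F x y :=
    fun F h1 h2 => integral_integral_swap (ib2 F h1 h2)
  have dsub : ∀ (F G : ℝ → ℝ → ℝ), Measurable (Function.uncurry F) →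
      Measurable (Function.uncurry G) → (∀ x y, |F x y| ≤ 1) → (∀ x y, |G x y| ≤ 1) →
      (∫ x in I01, ∫ y in I01, (F x y - G x y))
        = (∫ x in I01, ∫ y in I01, F x y) - (∫ x in I01, ∫ y in I01, G x y) := by
    intro F G h1 h2 b1 b2
    have e : ∀ x, (∫ y in I01, (F x y - G x y))
        = (∫ y in I01, F x y) - ∫ y in I01, G x y :=
      fun x => integral_sub (ib _ h1.of_uncurry_left (b1 x)) (ib _ h2.of_uncurry_left (b2 x))
    simp only [e]
    exact integral_sub
      (ib _ (h1.stronglyMeasurable.integral_prod_right (ν := volume.restrict I01)).measurable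
        (fun x => ibnd _ (b1 x)))
      (ib _ (h2.stronglyMeasurable.integral_prod_right (ν := volume.restrict I01)).measurable
        (fun x => ibnd _ (b2 x)))
  -- measurability of the two-variable integrands
  have gmes : Measurable (Function.uncurry (fun x y => ∫ z in I01, V x z * V y z)) := by
    have hF : Measurable (fun q : (ℝ × ℝ) × ℝ => V q.1.1 q.2 * V q.1.2 q.2) :=
      (hm.comp ((measurable_fst.comp measurable_fst).prodMk measurable_snd)).mul
        (hm.comp ((measurable_snd.comp measurable_fst).prodMk measurable_snd))
    exact (hF.stronglyMeasurable.integral_prod_right' (ν := volume.restrict I01)).measurable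
  have gb : ∀ x y, |∫ z in I01, V x z * V y z| ≤ 1 :=
    fun x y => ibnd _ (fun z => habs_mul (hVa x z) (hVa y z))
  have mF : Measurable (Function.uncurry (fun x y => V x y * ∫ z in I01, V y z)) :=
    hm.mul (dmes.comp measurable_snd)
  have bF : ∀ x y, |V x y * ∫ z in I01, V y z| ≤ 1 := fun x y => habs_mul (hVa x y) (da y)
  have mG : Measurable (Function.uncurry (fun x y => V x y * ∫ z in I01, V x z * V y z)) :=
    hm.mul gmes
  have bG : ∀ x y, |V x y * ∫ z in I01, V x z * V y z| ≤ 1 :=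
    fun x y => habs_mul (hVa x y) (gb x y)
  -- Step 1: innermost integral
  have inner1 : ∀ x y, (∫ z in I01, V x y * V y z * V z x)
      = V x y * (∫ z in I01, V y z) - V x y * (∫ z in I01, V x z * V y z) := by
    intro x y
    have e : ∀ z, V x y * V y z * V z x = V x y * (V y z - V x z * V y z) := by
      intro z; rw [hflip x z]; ring
    simp only [e]
    rw [integral_const_mul,
      integral_sub (ib _ (hmL y) (fun z => hVa y z))
        (ib (fun z => V x z * V y z) ((hmL x).mul (hmL y)) (fun z => habs_mul (hVa x z) (hVa y z)))]
    ring
  have step2 : (∫ x in I01, ∫ y in I01, ∫ z in I01, V x y * V y z * V z x)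
      = (∫ x in I01, ∫ y in I01, V x y * (∫ z in I01, V y z))
        - (∫ x in I01, ∫ y in I01, V x y * ∫ z in I01, V x z * V y z) := by
    simp only [inner1]
    exact dsub _ _ mF mG bF bG
  -- P
  have hP : (∫ x in I01, ∫ y in I01, V x y * (∫ z in I01, V y z))
      = ∫ y in I01, (1 - ∫ z in I01, V y z) * (∫ z in I01, V y z) := by
    rw [dswap _ mF bF]
    have e : ∀ y, (∫ x in I01, V x y * (∫ z in I01, V y z))
        = (1 - ∫ z in I01, V y z) * (∫ z in I01, V y z) := by
      intro y; rw [integral_mul_const, col y]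
    simp only [e]
  -- Q
  have hQsym : (∫ x in I01, ∫ y in I01, V x y * ∫ z in I01, V x z * V y z)
      = ∫ x in I01, ∫ y in I01, (1 - V x y) * ∫ z in I01, V x z * V y z := by
    rw [dswap _ mG bG]
    have e : ∀ a b, V b a * (∫ z in I01, V b z * V a z)
        = (1 - V a b) * ∫ z in I01, V a z * V b z := by
      intro a b
      rw [hflip a b, show (fun z => V b z * V a z) = fun z => V a z * V b z from
        funext fun z => mul_comm _ _]
    simp only [e]
  have h2Q : (∫ x in I01, ∫ y in I01, (1 - V x y) * ∫ z in I01, V x z * V y z)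
      = (∫ x in I01, ∫ y in I01, (∫ z in I01, V x z * V y z))
        - (∫ x in I01, ∫ y in I01, V x y * ∫ z in I01, V x z * V y z) := by
    have e2 : ∀ x y, (1 - V x y) * (∫ z in I01, V x z * V y z)
        = (∫ z in I01, V x z * V y z) - V x y * (∫ z in I01, V x z * V y z) := by
      intro x y; ring
    simp only [e2]
    exact dsub _ _ gmes mG gb bG
  -- G
  have hG : (∫ x in I01, ∫ y in I01, (∫ z in I01, V x z * V y z))
      = ∫ z in I01, (1 - ∫ w in I01, V z w) * (1 - ∫ w in I01, V z w) := by
    have e3 : ∀ x, (∫ y in I01, ∫ z in I01, V x z * V y z)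
        = ∫ z in I01, V x z * (1 - ∫ w in I01, V z w) := by
      intro x
      rw [dswap (fun y z => V x z * V y z)
        (((hmL x).comp measurable_snd).mul hm)
        (fun y z => habs_mul (hVa x z) (hVa y z))]
      have e4 : ∀ z, (∫ y in I01, V x z * V y z)
          = V x z * (1 - ∫ w in I01, V z w) := by
        intro z; rw [integral_const_mul, col z]
      simp only [e4]
    simp only [e3]
    rw [dswap (fun x z => V x z * (1 - ∫ w in I01, V z w))
      (hm.mul (measurable_const.sub (dmes.comp measurable_snd)))
      (fun x z => habs_mul (hVa x z) (abs_le.2 ⟨by linarith [d1 z], by linarith [d0 z]⟩))]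
    have e5 : ∀ z, (∫ x in I01, V x z * (1 - ∫ w in I01, V z w))
        = (1 - ∫ w in I01, V z w) * (1 - ∫ w in I01, V z w) := by
      intro z; rw [integral_mul_const, col z]
    simp only [e5]
  -- mean of d is 1/2
  have hmean : (∫ x in I01, ∫ y in I01, V x y) = 1/2 := by
    have h1 : (∫ x in I01, ∫ y in I01, V x y) = ∫ y in I01, ∫ x in I01, V x y :=
      dswap V hm hVa
    have h2 : (∫ y in I01, ∫ x in I01, V x y)
        = ∫ y in I01, (1 - ∫ z in I01, V y z) := by simp only [col]
    have h3 : (∫ y in I01, (1 - ∫ z in I01, V y z))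
        = 1 - ∫ y in I01, ∫ z in I01, V y z := by
      rw [integral_sub (integrable_const 1) (ib _ dmes da), int_one]
    rw [h2, h3] at h1
    linarith
  -- integrability of d and d*d
  have idd : Integrable (fun y => (∫ z in I01, V y z) * (∫ z in I01, V y z))
      (volume.restrict I01) :=
    ib _ (dmes.mul dmes) (fun y => habs_mul (da y) (da y))
  have hPd : (∫ y in I01, (1 - ∫ z in I01, V y z) * (∫ z in I01, V y z))
      = (∫ y in I01, ∫ z in I01, V y z)
        - ∫ y in I01, (∫ z in I01, V y z) * (∫ z in I01, V y z) := by
    have e6 : ∀ y, (1 - ∫ z in I01, V y z) * (∫ z in I01, V y z)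
        = (∫ z in I01, V y z) - (∫ z in I01, V y z) * (∫ z in I01, V y z) := by
      intro y; ring
    simp only [e6]
    exact integral_sub (ib _ dmes da) idd
  have hGd : (∫ z in I01, (1 - ∫ w in I01, V z w) * (1 - ∫ w in I01, V z w))
      = 1 - 2 * (∫ z in I01, ∫ w in I01, V z w)
        + ∫ z in I01, (∫ w in I01, V z w) * (∫ w in I01, V z w) := by
    have e7 : ∀ z, (1 - ∫ w in I01, V z w) * (1 - ∫ w in I01, V z w)
        = 1 - (2 * (∫ w in I01, V z w)
            - (∫ w in I01, V z w) * (∫ w in I01, V z w)) := by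
      intro z; ring
    simp only [e7]
    have i1 : Integrable (fun z => 2 * (∫ w in I01, V z w)) (volume.restrict I01) :=
      (ib _ dmes da).const_mul 2
    have i2 : Integrable (fun z => 2 * (∫ w in I01, V z w)
        - (∫ w in I01, V z w) * (∫ w in I01, V z w)) (volume.restrict I01) := i1.sub idd
    rw [integral_sub (integrable_const 1) i2, int_one, integral_sub i1 idd,
      integral_const_mul]
    ring
  have hsq : (∫ x in I01, (∫ y in I01, V x y)^2)
      = ∫ x in I01, (∫ y in I01, V x y) * (∫ y in I01, V x y) := by
    simp only [pow_two]
  rw [step2, hP, hPd, hsq]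
  linarith [hQsym.trans h2Q, hG, hGd, hmean]

lemma sum_indicator_eval {n : ℕ} (Z : Fin n → Set ℝ)
    (hZdisj : ∀ i j, i ≠ j → Disjoint (Z i) (Z j)) (c : Fin n → Fin n → ℝ)
    {i j : Fin n} {x y : ℝ} (hx : x ∈ Z i) (hy : y ∈ Z j) :
    (∑ i', ∑ j', (Z i').indicator (fun _ => (1:ℝ)) x
      * (Z j').indicator (fun _ => (1:ℝ)) y * c i' j') = c i j := by
  rw [Finset.sum_eq_single i]
  · rw [Finset.sum_eq_single j]
    · simp [Set.indicator_of_mem hx, Set.indicator_of_mem hy]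
    · intro b _ hb
      have hyb : y ∉ Z b := fun hmem => Set.disjoint_left.1 (hZdisj b j hb) hmem hy
      simp [Set.indicator_of_notMem hyb]
    · simp
  · intro b _ hb
    have hxb : x ∉ Z b := fun hmem => Set.disjoint_left.1 (hZdisj b i hb) hmem hx
    simp [Set.indicator_of_notMem hxb]
  · simp

end TL13

open TL13 in
/-- A step approximation of a tournament limit does not decrease the density
of C₃. -/
theorem stmt_13 (W : ℝ → ℝ → ℝ)
    (hmeas : Measurable (Function.uncurry W))
    (hrange : ∀ x ∈ Set.Icc (0:ℝ) 1, ∀ y ∈ Set.Icc (0:ℝ) 1, W x y ∈ Set.Icc (0:ℝ) 1)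
    (hsym : ∀ x ∈ Set.Icc (0:ℝ) 1, ∀ y ∈ Set.Icc (0:ℝ) 1, W x y + W y x = 1)
    (n : ℕ) (hn : 0 < n) (Z : Fin n → Set ℝ)
    (hZmeas : ∀ i, MeasurableSet (Z i))
    (hZdisj : ∀ i j, i ≠ j → Disjoint (Z i) (Z j))
    (hZunion : (⋃ i, Z i) = Set.Icc (0:ℝ) 1)
    (hZvol : ∀ i, volume (Z i) = ENNReal.ofReal (1 / n))
    (W' : ℝ → ℝ → ℝ)
    (hW' : ∀ i j, ∀ x ∈ Z i, ∀ y ∈ Z j,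
      W' x y = (n : ℝ) ^ 2 * ∫ x' in Z i, ∫ y' in Z j, W x' y') :
    cycle3Density W ≤ cycle3Density W' := by
  classical
  have hI : MeasurableSet I01 := measurableSet_Icc
  have hn0 : (0:ℝ) < n := by exact_mod_cast hn
  have hinv1 : (1:ℝ)/n ≤ 1 := by rw [div_le_one hn0]; exact_mod_cast hn
  have hZsub : ∀ i, Z i ⊆ I01 := fun i => hZunion ▸ Set.subset_iUnion Z i
  have hPair : Pairwise (Function.onFun Disjoint Z) := fun i j h => hZdisj i j h
  have instZ : ∀ i, IsFiniteMeasure (volume.restrict (Z i)) := fun i =>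
    ⟨by rw [Measure.restrict_apply_univ, hZvol]; exact ENNReal.ofReal_lt_top⟩
  have hvolZ : ∀ i, (volume (Z i)).toReal = 1/n := fun i => by
    rw [hZvol i, ENNReal.toReal_ofReal (by positivity)]
  -- truncated kernel V
  obtain ⟨V, hVdef⟩ : ∃ V : ℝ → ℝ → ℝ,
      V = fun x y => if x ∈ I01 ∧ y ∈ I01 then W x y else 1/2 := ⟨_, rfl⟩
  have hVW : ∀ x ∈ I01, ∀ y ∈ I01, V x y = W x y := by
    intro x hx y hy; rw [hVdef]; simp [hx, hy]
  have hmV : Measurable (Function.uncurry V) := by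
    rw [hVdef]
    exact Measurable.ite (hI.prod hI) hmeas measurable_const
  have hrV : ∀ x y, V x y ∈ Set.Icc (0:ℝ) 1 := by
    intro x y; rw [hVdef]; dsimp only
    split_ifs with h
    · exact hrange x h.1 y h.2
    · constructor <;> norm_num
  have hsV : ∀ x y, V x y + V y x = 1 := by
    intro x y; rw [hVdef]; dsimp only
    by_cases hx : x ∈ I01 <;> by_cases hy : y ∈ I01 <;>
      simp [hx, hy] <;> first | exact hsym x hx y hy | norm_num
  have hV0 : ∀ x y, 0 ≤ V x y := fun x y => (hrV x y).1
  have hV1 : ∀ x y, V x y ≤ 1 := fun x y => (hrV x y).2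
  have hVa : ∀ x y, |V x y| ≤ 1 := fun x y => abs_le.2 ⟨by linarith [hV0 x y], hV1 x y⟩
  have hmVL : ∀ x, Measurable (V x) := fun x => hmV.of_uncurry_left
  -- integrability helpers on the pieces
  have ibZ : ∀ (k : Fin n) (f : ℝ → ℝ), Measurable f → (∀ x, |f x| ≤ 1) →
      Integrable f (volume.restrict (Z k)) := fun k f h1 h2 => by
    haveI := instZ k; exact bdd_int h1.aestronglyMeasurable h2
  have ibndZ : ∀ (k : Fin n) (f : ℝ → ℝ), (∀ x, |f x| ≤ 1) → |∫ x in Z k, f x| ≤ 1 := by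
    intro k f hb
    haveI := instZ k
    have h := norm_integral_le_of_norm_le_const (μ := volume.restrict (Z k)) (f := f)
      (C := 1) (Filter.Eventually.of_forall fun x => by simpa using hb x)
    have hv : ((volume.restrict (Z k)) Set.univ).toReal = 1/n := by
      rw [Measure.restrict_apply_univ]; exact hvolZ k
    rw [Real.norm_eq_abs] at h
    calc |∫ x in Z k, f x| ≤ 1 * ((volume.restrict (Z k)) Set.univ).toReal := h
      _ = 1/n := by rw [one_mul, hv]
      _ ≤ 1 := hinv1
  have ib01 : ∀ (f : ℝ → ℝ), Measurable f → (∀ x, |f x| ≤ 1) →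
      Integrable f (volume.restrict I01) := fun f h1 h2 => bdd_int h1.aestronglyMeasurable h2
  -- the block averages
  obtain ⟨cc, hccdef⟩ : ∃ cc : Fin n → Fin n → ℝ,
      cc = fun i j => (n:ℝ)^2 * ∫ x' in Z i, ∫ y' in Z j, V x' y' := ⟨_, rfl⟩
  have hinnerle : ∀ (j : Fin n) (a : ℝ), (∫ b in Z j, V a b) ≤ 1/n := by
    intro j a
    haveI := instZ j
    calc (∫ b in Z j, V a b) ≤ ∫ (_b : ℝ) in Z j, (1:ℝ) :=
          integral_mono (ibZ j _ (hmVL a) (hVa a)) (integrable_const 1) (hV1 a)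
      _ = 1/n := by rw [setIntegral_const, measureReal_def, hvolZ j, smul_eq_mul, mul_one]
  have hinner0 : ∀ (j : Fin n) (a : ℝ), 0 ≤ ∫ b in Z j, V a b :=
    fun j a => integral_nonneg (hV0 a)
  have hinnermes : ∀ j : Fin n, Measurable (fun a => ∫ b in Z j, V a b) := fun j =>
    (hmV.stronglyMeasurable.integral_prod_right (ν := volume.restrict (Z j))).measurable
  have hcc01 : ∀ i j, cc i j ∈ Set.Icc (0:ℝ) 1 := by
    intro i j
    rw [hccdef]; dsimp only
    constructor
    · have : 0 ≤ ∫ a in Z i, ∫ b in Z j, V a b :=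
        integral_nonneg fun a => hinner0 j a
      positivity
    · have h1 : (∫ a in Z i, ∫ b in Z j, V a b) ≤ ∫ (_a : ℝ) in Z i, (1:ℝ)/n := by
        haveI := instZ i
        exact integral_mono
          (ibZ i _ (hinnermes j) (fun a => abs_le.2 ⟨by linarith [hinner0 j a],
            le_trans (hinnerle j a) hinv1⟩))
          (integrable_const _) (fun a => hinnerle j a)
      have h2 : (∫ (_a : ℝ) in Z i, (1:ℝ)/n) = 1/n * (1/n) := by
        rw [setIntegral_const, measureReal_def, hvolZ i, smul_eq_mul]
      have h3 : (n:ℝ)^2 * (1/n * (1/n)) = 1 := by field_simp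
      nlinarith [h1, h2]
  have hmVflip : Measurable (Function.uncurry (fun a b => V b a)) :=
    hmV.comp (measurable_snd.prodMk measurable_fst)
  have hccsym : ∀ i j, cc i j + cc j i = 1 := by
    intro i j
    haveI := instZ i; haveI := instZ j
    have hswap : (∫ a in Z j, ∫ b in Z i, V a b) = ∫ a in Z i, ∫ b in Z j, V b a :=
      integral_integral_swap (bdd_int (C := 1) hmV.aestronglyMeasurable
        (fun p => hVa p.1 p.2))
    have hadd : (∫ a in Z i, ∫ b in Z j, V a b) + (∫ a in Z i, ∫ b in Z j, V b a)
        = 1/n * (1/n) := by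
      rw [← integral_add (ibZ i _ (hinnermes j)
          (fun a => abs_le.2 ⟨by linarith [hinner0 j a], le_trans (hinnerle j a) hinv1⟩))
        (ibZ i _ ((hmVflip.stronglyMeasurable.integral_prod_right
            (ν := volume.restrict (Z j))).measurable)
          (fun a => ibndZ j _ (fun b => hVa b a)))]
      · have e : ∀ a, ((∫ b in Z j, V a b) + ∫ b in Z j, V b a)
            = ∫ (_b : ℝ) in Z j, (1:ℝ) := by
          intro a
          rw [← integral_add (ibZ j _ (hmVL a) (hVa a))
            (ibZ j _ hmV.of_uncurry_right (fun b => hVa b a))]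
          simp only [hsV]
        simp only [e]
        rw [setIntegral_const, setIntegral_const, measureReal_def, measureReal_def, hvolZ i, hvolZ j,
          smul_eq_mul, smul_eq_mul]
        ring
    have : cc i j + cc j i
        = (n:ℝ)^2 * ((∫ a in Z i, ∫ b in Z j, V a b) + ∫ a in Z i, ∫ b in Z j, V b a) := by
      rw [hccdef]; dsimp only; rw [hswap]; ring
    rw [this, hadd]; field_simp
  -- the step function V'
  obtain ⟨V', hV'def⟩ : ∃ V' : ℝ → ℝ → ℝ,
      V' = fun x y => (∑ i, ∑ j, (Z i).indicator (fun _ => (1:ℝ)) x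
          * (Z j).indicator (fun _ => (1:ℝ)) y * cc i j)
        + (if x ∈ I01 ∧ y ∈ I01 then 0 else 1/2) := ⟨_, rfl⟩
  have hV'piece : ∀ i j, ∀ x ∈ Z i, ∀ y ∈ Z j, V' x y = cc i j := by
    intro i j x hx y hy
    rw [hV'def]; dsimp only
    rw [sum_indicator_eval Z hZdisj cc hx hy,
      if_pos ⟨hZsub i hx, hZsub j hy⟩, add_zero]
  have hV'out : ∀ x y, ¬(x ∈ I01 ∧ y ∈ I01) → V' x y = 1/2 := by
    intro x y hxy
    rw [hV'def]; dsimp only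
    rw [if_neg hxy]
    have hz : (∑ i, ∑ j, (Z i).indicator (fun _ => (1:ℝ)) x
        * (Z j).indicator (fun _ => (1:ℝ)) y * cc i j) = 0 := by
      apply Finset.sum_eq_zero; intro i _
      apply Finset.sum_eq_zero; intro j _
      by_cases hx : x ∈ Z i
      · by_cases hy : y ∈ Z j
        · exact absurd ⟨hZsub i hx, hZsub j hy⟩ hxy
        · rw [Set.indicator_of_notMem hy]; ring
      · rw [Set.indicator_of_notMem hx]; ring
    rw [hz, zero_add]
  have hmem' : ∀ x ∈ I01, ∃ i, x ∈ Z i := by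
    intro x hx
    rw [← hZunion] at hx
    exact Set.mem_iUnion.1 hx
  have hmV' : Measurable (Function.uncurry V') := by
    rw [hV'def]
    apply Measurable.add
    · apply Finset.measurable_sum; intro i _
      apply Finset.measurable_sum; intro j _
      exact (((measurable_const.indicator (hZmeas i)).comp measurable_fst).mul
        ((measurable_const.indicator (hZmeas j)).comp measurable_snd)).mul
        measurable_const
    · exact Measurable.ite ((hI.prod hI) : MeasurableSet {p : ℝ × ℝ | p.1 ∈ I01 ∧ p.2 ∈ I01})
        measurable_const measurable_const
  have hrV' : ∀ x y, V' x y ∈ Set.Icc (0:ℝ) 1 := by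
    intro x y
    by_cases hxy : x ∈ I01 ∧ y ∈ I01
    · obtain ⟨i, hi⟩ := hmem' x hxy.1
      obtain ⟨j, hj⟩ := hmem' y hxy.2
      rw [hV'piece i j x hi y hj]; exact hcc01 i j
    · rw [hV'out x y hxy]; constructor <;> norm_num
  have hsV' : ∀ x y, V' x y + V' y x = 1 := by
    intro x y
    by_cases hxy : x ∈ I01 ∧ y ∈ I01
    · obtain ⟨i, hi⟩ := hmem' x hxy.1
      obtain ⟨j, hj⟩ := hmem' y hxy.2
      rw [hV'piece i j x hi y hj, hV'piece j i y hj x hi]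
      exact hccsym i j
    · rw [hV'out x y hxy, hV'out y x (fun h => hxy ⟨h.2, h.1⟩)]; norm_num
  -- densities agree with truncations
  have eW : cycle3Density W = ∫ x in I01, ∫ y in I01, ∫ z in I01,
      V x y * V y z * V z x := by
    unfold cycle3Density
    refine setIntegral_congr_fun hI (fun x hx => ?_)
    refine setIntegral_congr_fun hI (fun y hy => ?_)
    refine setIntegral_congr_fun hI (fun z hz => ?_)
    rw [hVW x hx y hy, hVW y hy z hz, hVW z hz x hx]
  have hW'V' : ∀ x ∈ I01, ∀ y ∈ I01, W' x y = V' x y := by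
    intro x hx y hy
    obtain ⟨i, hi⟩ := hmem' x hx
    obtain ⟨j, hj⟩ := hmem' y hy
    rw [hV'piece i j x hi y hj, hW' i j x hi y hj, hccdef]
    dsimp only
    congr 1
    refine setIntegral_congr_fun (hZmeas i) (fun a ha => ?_)
    refine setIntegral_congr_fun (hZmeas j) (fun b hb => ?_)
    exact (hVW a (hZsub i ha) b (hZsub j hb)).symm
  have eW' : cycle3Density W' = ∫ x in I01, ∫ y in I01, ∫ z in I01,
      V' x y * V' y z * V' z x := by
    unfold cycle3Density
    refine setIntegral_congr_fun hI (fun x hx => ?_)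
    refine setIntegral_congr_fun hI (fun y hy => ?_)
    refine setIntegral_congr_fun hI (fun z hz => ?_)
    rw [hW'V' x hx y hy, hW'V' y hy z hz, hW'V' z hz x hx]
  -- decomposition of integrals over [0,1] along the partition
  have decompose : ∀ (f : ℝ → ℝ), Integrable f (volume.restrict I01) →
      (∫ x in I01, f x) = ∑ i, ∫ x in Z i, f x := by
    intro f hf
    rw [← hZunion] at hf ⊢
    rw [integral_iUnion hZmeas hPair hf, tsum_fintype]
  have int_one01 : (∫ (_x : ℝ) in I01, (1:ℝ)) = 1 := by simp [Real.volume_Icc]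
  -- degree functions
  have hdmes : Measurable (fun x => ∫ y in I01, V x y) :=
    (hmV.stronglyMeasurable.integral_prod_right (ν := volume.restrict I01)).measurable
  have hdmes' : Measurable (fun x => ∫ y in I01, V' x y) :=
    (hmV'.stronglyMeasurable.integral_prod_right (ν := volume.restrict I01)).measurable
  have hd0 : ∀ x, 0 ≤ ∫ y in I01, V x y := fun x => integral_nonneg (hV0 x)
  have hd1 : ∀ x, (∫ y in I01, V x y) ≤ 1 := by
    intro x
    calc (∫ y in I01, V x y) ≤ ∫ (_y : ℝ) in I01, (1:ℝ) :=
          integral_mono (ib01 _ (hmVL x) (hVa x)) (integrable_const 1) (hV1 x)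
      _ = 1 := int_one01
  have hda : ∀ x, |∫ y in I01, V x y| ≤ 1 :=
    fun x => abs_le.2 ⟨by linarith [hd0 x], hd1 x⟩
  have hV'a : ∀ x y, |V' x y| ≤ 1 :=
    fun x y => abs_le.2 ⟨by linarith [(hrV' x y).1], (hrV' x y).2⟩
  have hd0' : ∀ x, 0 ≤ ∫ y in I01, V' x y :=
    fun x => integral_nonneg (fun y => (hrV' x y).1)
  have hd1' : ∀ x, (∫ y in I01, V' x y) ≤ 1 := by
    intro x
    calc (∫ y in I01, V' x y) ≤ ∫ (_y : ℝ) in I01, (1:ℝ) :=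
          integral_mono (ib01 _ hmV'.of_uncurry_left (hV'a x)) (integrable_const 1)
            (fun y => (hrV' x y).2)
      _ = 1 := int_one01
  -- the degree of V' is the block average of the degree of V
  have key1 : ∀ i, ∀ x ∈ Z i,
      (∫ y in I01, V' x y) = n * ∫ a in Z i, ∫ y in I01, V a y := by
    intro i x hx
    have h1 : (∫ y in I01, V' x y) = ∑ j, ∫ y in Z j, V' x y :=
      decompose _ (ib01 _ hmV'.of_uncurry_left (hV'a x))
    have h2 : ∀ j : Fin n, (∫ y in Z j, V' x y) = 1/n * cc i j := by
      intro j
      haveI := instZ j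
      rw [setIntegral_congr_fun (hZmeas j) (fun y hy => hV'piece i j x hx y hy),
        setIntegral_const, measureReal_def, hvolZ j, smul_eq_mul]
    have h3 : ∀ a, (∫ y in I01, V a y) = ∑ j, ∫ y in Z j, V a y :=
      fun a => decompose _ (ib01 _ (hmVL a) (hVa a))
    have h4 : (∫ a in Z i, ∫ y in I01, V a y) = ∑ j, ∫ a in Z i, ∫ y in Z j, V a y := by
      simp only [h3]
      exact integral_finset_sum Finset.univ
        (fun j _ => ibZ i _ (hinnermes j) (fun a => ibndZ j _ (hVa a)))
    rw [h1, h4, Finset.mul_sum]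
    simp only [h2]
    apply Finset.sum_congr rfl
    intro j _
    rw [hccdef]; dsimp only
    field_simp
  -- Jensen: the square integral of the averaged degree is smaller
  have hsqb : ∀ x, |(∫ y in I01, V x y)^2| ≤ 1 := by
    intro x
    have h1 := hd0 x; have h2 := hd1 x
    exact abs_le.2 ⟨by nlinarith, by nlinarith⟩
  have hsqb' : ∀ x, |(∫ y in I01, V' x y)^2| ≤ 1 := by
    intro x
    have h1 := hd0' x; have h2 := hd1' x
    exact abs_le.2 ⟨by nlinarith, by nlinarith⟩
  have hineq : (∫ x in I01, (∫ y in I01, V' x y)^2)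
      ≤ ∫ x in I01, (∫ y in I01, V x y)^2 := by
    rw [decompose _ (ib01 _ (hdmes'.pow_const 2) hsqb'),
      decompose _ (ib01 _ (hdmes.pow_const 2) hsqb)]
    apply Finset.sum_le_sum
    intro i _
    haveI := instZ i
    set av := ∫ a in Z i, ∫ y in I01, V a y with hav
    have hconst : (∫ x in Z i, (∫ y in I01, V' x y)^2) = 1/n * ((n:ℝ) * av)^2 := by
      rw [setIntegral_congr_fun (hZmeas i) (fun x hx => by rw [key1 i x hx]),
        setIntegral_const, measureReal_def, hvolZ i, smul_eq_mul]
    have idZ : Integrable (fun x => ∫ y in I01, V x y) (volume.restrict (Z i)) :=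
      ibZ i _ hdmes hda
    have idZ2 : Integrable (fun x => (∫ y in I01, V x y)^2) (volume.restrict (Z i)) :=
      ibZ i _ (hdmes.pow_const 2) hsqb
    have hexp : (∫ x in Z i, ((∫ y in I01, V x y) - n * av)^2)
        = (∫ x in Z i, (∫ y in I01, V x y)^2)
          - 2*((n:ℝ)*av)*av + ((n:ℝ)*av)^2 * (1/n) := by
      have e : ∀ x, ((∫ y in I01, V x y) - (n:ℝ)*av)^2
          = (∫ y in I01, V x y)^2 - 2*((n:ℝ)*av)*(∫ y in I01, V x y)
            + ((n:ℝ)*av)^2 := fun x => by ring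
      simp only [e]
      have imul : Integrable (fun x => 2*((n:ℝ)*av) * (∫ y in I01, V x y))
          (volume.restrict (Z i)) := idZ.const_mul (2*((n:ℝ)*av))
      have isub : Integrable (fun x => (∫ y in I01, V x y)^2
          - 2*((n:ℝ)*av)*(∫ y in I01, V x y)) (volume.restrict (Z i)) := idZ2.sub imul
      rw [integral_add isub (integrable_const _),
        integral_sub idZ2 imul,
        integral_const_mul, setIntegral_const, measureReal_def, hvolZ i, smul_eq_mul, ← hav]
      ring
    have hpos : 0 ≤ ∫ x in Z i, ((∫ y in I01, V x y) - n * av)^2 :=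
      integral_nonneg fun x => sq_nonneg _
    have harith : ((n:ℝ)*av)^2 * (1/n) = n * av^2 := by field_simp
    have harith2 : 1/n * ((n:ℝ)*av)^2 = n * av^2 := by field_simp
    have harith3 : 2*((n:ℝ)*av)*av = 2*(n*av^2) := by ring
    rw [hconst, harith2]
    linarith [hexp, hpos, harith, harith3]
  rw [eW, eW', tri_formula V hmV hrV hsV, tri_formula V' hmV' hrV' hsV']
  linarith [hineq]
end

section
/- Let W be a tournament limit and let z be a real number with 1/2 ≤ z ≤ 1 such that t(C₃,W) = (z³ + (1−z)³)/8. Then t(C₄,W) ≥ (z⁴ + (1−z)⁴)/16. -/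
open MeasureTheory Function

noncomputable abbrev mu01 : Measure ℝ := volume.restrict (Set.Icc 0 1)

instance : IsProbabilityMeasure mu01 :=
  ⟨by rw [Measure.restrict_apply_univ]; simp [Real.volume_Icc]⟩

def BM1 (u : ℝ → ℝ) : Prop := Measurable u ∧ ∃ C, ∀ x, |u x| ≤ C

def BM2 (F : ℝ → ℝ → ℝ) : Prop :=
  Measurable (uncurry F) ∧ ∃ C, ∀ x y, |F x y| ≤ C

def BM3 (G : ℝ → ℝ → ℝ → ℝ) : Prop :=
  (Measurable fun p : (ℝ × ℝ) × ℝ => G p.1.1 p.1.2 p.2) ∧ ∃ C, ∀ x y z, |G x y z| ≤ C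

lemma abs_mul_le {a b c d : ℝ} (h1 : |a| ≤ c) (h2 : |b| ≤ d) : |a * b| ≤ c * d := by
  rw [abs_mul]
  exact mul_le_mul h1 h2 (abs_nonneg _) ((abs_nonneg _).trans h1)

lemma BM1.integrable {u : ℝ → ℝ} (h : BM1 u) : Integrable u mu01 := by
  obtain ⟨hm, C, hC⟩ := h
  exact (integrable_const C).mono' hm.aestronglyMeasurable
    (Filter.Eventually.of_forall fun x => by simpa using hC x)

lemma BM1.const (c : ℝ) : BM1 fun _ => c := ⟨measurable_const, |c|, fun _ => le_refl _⟩

lemma BM1.add {u v : ℝ → ℝ} (hu : BM1 u) (hv : BM1 v) : BM1 fun x => u x + v x := by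
  obtain ⟨hm, C, hC⟩ := hu; obtain ⟨hm', C', hC'⟩ := hv
  exact ⟨hm.add hm', C + C', fun x => (abs_add_le _ _).trans (add_le_add (hC x) (hC' x))⟩

lemma BM1.mul {u v : ℝ → ℝ} (hu : BM1 u) (hv : BM1 v) : BM1 fun x => u x * v x := by
  obtain ⟨hm, C, hC⟩ := hu; obtain ⟨hm', C', hC'⟩ := hv
  exact ⟨hm.mul hm', C * C', fun x => abs_mul_le (hC x) (hC' x)⟩

lemma BM1.sq {u : ℝ → ℝ} (hu : BM1 u) : BM1 fun x => (u x)^2 := by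
  have := hu.mul hu
  simpa [pow_two] using this

lemma BM1.abs_integral_le {u : ℝ → ℝ} {C : ℝ} (hC : ∀ x, |u x| ≤ C) :
    |∫ x, u x ∂mu01| ≤ C := by
  have := norm_integral_le_of_norm_le_const (μ := mu01) (f := u) (C := C)
    (Filter.Eventually.of_forall fun x => by simpa using hC x)
  simpa using this

lemma BM2.integrable {F : ℝ → ℝ → ℝ} (h : BM2 F) :
    Integrable (uncurry F) (mu01.prod mu01) := by
  obtain ⟨hm, C, hC⟩ := h
  exact (integrable_const C).mono' hm.aestronglyMeasurable
    (Filter.Eventually.of_forall fun p => by simpa [uncurry] using hC p.1 p.2)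

lemma BM2.swap {F : ℝ → ℝ → ℝ} (h : BM2 F) :
    ∫ x, ∫ y, F x y ∂mu01 ∂mu01 = ∫ y, ∫ x, F x y ∂mu01 ∂mu01 :=
  integral_integral_swap h.integrable

lemma BM2.intr {F : ℝ → ℝ → ℝ} (h : BM2 F) : BM1 fun x => ∫ y, F x y ∂mu01 := by
  obtain ⟨hm, C, hC⟩ := h
  exact ⟨(hm.stronglyMeasurable.integral_prod_right).measurable, C,
    fun x => BM1.abs_integral_le (fun y => hC x y)⟩

lemma BM2.fst {F : ℝ → ℝ → ℝ} (h : BM2 F) (x : ℝ) : BM1 (F x) := by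
  obtain ⟨hm, C, hC⟩ := h
  exact ⟨hm.comp measurable_prodMk_left, C, fun y => hC x y⟩

lemma BM2.mul {F G : ℝ → ℝ → ℝ} (hF : BM2 F) (hG : BM2 G) :
    BM2 fun x y => F x y * G x y := by
  obtain ⟨hm, C, hC⟩ := hF; obtain ⟨hm', C', hC'⟩ := hG
  exact ⟨hm.mul hm', C * C', fun x y => abs_mul_le (hC x y) (hC' x y)⟩

lemma BM2.sq {F : ℝ → ℝ → ℝ} (hF : BM2 F) : BM2 fun x y => (F x y)^2 := by
  have := hF.mul hF
  simpa [pow_two] using this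

lemma BM2.swapArgs {F : ℝ → ℝ → ℝ} (h : BM2 F) : BM2 fun x y => F y x := by
  obtain ⟨hm, C, hC⟩ := h
  exact ⟨hm.comp measurable_swap, C, fun x y => hC y x⟩

lemma BM1.bm2_fst {u : ℝ → ℝ} (h : BM1 u) : BM2 fun x _ => u x := by
  obtain ⟨hm, C, hC⟩ := h
  exact ⟨hm.comp measurable_fst, C, fun x _ => hC x⟩

lemma BM1.bm2_snd {u : ℝ → ℝ} (h : BM1 u) : BM2 fun _ y => u y := by
  obtain ⟨hm, C, hC⟩ := h
  exact ⟨hm.comp measurable_snd, C, fun _ y => hC y⟩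

lemma BM2.bm3_13 {F : ℝ → ℝ → ℝ} (h : BM2 F) : BM3 fun x _ z => F x z := by
  obtain ⟨hm, C, hC⟩ := h
  exact ⟨hm.comp ((measurable_fst.fst).prodMk measurable_snd), C, fun x _ z => hC x z⟩

lemma BM2.bm3_23 {F : ℝ → ℝ → ℝ} (h : BM2 F) : BM3 fun _ y z => F y z := by
  obtain ⟨hm, C, hC⟩ := h
  exact ⟨hm.comp ((measurable_fst.snd).prodMk measurable_snd), C, fun _ y z => hC y z⟩

lemma BM2.bm3_32 {F : ℝ → ℝ → ℝ} (h : BM2 F) : BM3 fun _ y z => F z y := by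
  obtain ⟨hm, C, hC⟩ := h
  exact ⟨hm.comp (measurable_snd.prodMk (measurable_fst.snd)), C, fun _ y z => hC z y⟩

lemma BM3.mul {F G : ℝ → ℝ → ℝ → ℝ} (hF : BM3 F) (hG : BM3 G) :
    BM3 fun x y z => F x y z * G x y z := by
  obtain ⟨hm, C, hC⟩ := hF; obtain ⟨hm', C', hC'⟩ := hG
  exact ⟨hm.mul hm', C * C', fun x y z => abs_mul_le (hC x y z) (hC' x y z)⟩

lemma BM3.intr {G : ℝ → ℝ → ℝ → ℝ} (h : BM3 G) :
    BM2 fun x y => ∫ z, G x y z ∂mu01 := by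
  obtain ⟨hm, C, hC⟩ := h
  refine ⟨?_, C, fun x y => BM1.abs_integral_le (fun z => hC x y z)⟩
  exact (hm.stronglyMeasurable.integral_prod_right').measurable
lemma int_congr {u v : ℝ → ℝ} (h : ∀ x, u x = v x) :
    ∫ x, u x ∂mu01 = ∫ x, v x ∂mu01 := by rw [funext h]

/-- integral of a linear combination of seven bounded measurable functions -/
lemma int_comb7 {u1 u2 u3 u4 u5 u6 u7 : ℝ → ℝ}
    (h1 : BM1 u1) (h2 : BM1 u2) (h3 : BM1 u3) (h4 : BM1 u4)
    (h5 : BM1 u5) (h6 : BM1 u6) (h7 : BM1 u7)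
    (k a1 a2 a3 a4 a5 a6 a7 : ℝ) :
    ∫ x, (k + a1 * u1 x + a2 * u2 x + a3 * u3 x + a4 * u4 x + a5 * u5 x
        + a6 * u6 x + a7 * u7 x) ∂mu01
      = k + a1 * (∫ x, u1 x ∂mu01) + a2 * (∫ x, u2 x ∂mu01) + a3 * (∫ x, u3 x ∂mu01)
        + a4 * (∫ x, u4 x ∂mu01) + a5 * (∫ x, u5 x ∂mu01) + a6 * (∫ x, u6 x ∂mu01)
        + a7 * (∫ x, u7 x ∂mu01) := by
  have b1 : BM1 fun x => a1 * u1 x := (BM1.const a1).mul h1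
  have b2 : BM1 fun x => a2 * u2 x := (BM1.const a2).mul h2
  have b3 : BM1 fun x => a3 * u3 x := (BM1.const a3).mul h3
  have b4 : BM1 fun x => a4 * u4 x := (BM1.const a4).mul h4
  have b5 : BM1 fun x => a5 * u5 x := (BM1.const a5).mul h5
  have b6 : BM1 fun x => a6 * u6 x := (BM1.const a6).mul h6
  have b7 : BM1 fun x => a7 * u7 x := (BM1.const a7).mul h7
  have c0 : BM1 fun _ : ℝ => k := BM1.const k
  have c1 := c0.add b1
  have c2 := c1.add b2
  have c3 := c2.add b3
  have c4 := c3.add b4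
  have c5 := c4.add b5
  have c6 := c5.add b6
  rw [integral_add c6.integrable b7.integrable,
      integral_add c5.integrable b6.integrable,
      integral_add c4.integrable b5.integrable,
      integral_add c3.integrable b4.integrable,
      integral_add c2.integrable b3.integrable,
      integral_add c1.integrable b2.integrable,
      integral_add c0.integrable b1.integrable,
      integral_const_mul, integral_const_mul, integral_const_mul, integral_const_mul,
      integral_const_mul, integral_const_mul, integral_const_mul, integral_const]
  simp

/-- Cauchy–Schwarz for integrals of bounded measurable functions. -/
lemma int_cs {u w : ℝ → ℝ} (hu : BM1 u) (hw : BM1 w) :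
    (∫ x, u x * w x ∂mu01)^2 ≤ (∫ x, (u x)^2 ∂mu01) * (∫ x, (w x)^2 ∂mu01) := by
  set α := ∫ x, (u x)^2 ∂mu01 with hα
  set β := ∫ x, (w x)^2 ∂mu01 with hβ
  set γ := ∫ x, u x * w x ∂mu01 with hγ
  have key : ∀ t : ℝ, 0 ≤ α - 2*t*γ + t^2*β := by
    intro t
    have e : ∫ x, (u x - t * w x)^2 ∂mu01 = α - 2*t*γ + t^2*β := by
      have := int_comb7 hu.sq (hu.mul hw) hw.sq (BM1.const 0) (BM1.const 0)
        (BM1.const 0) (BM1.const 0) 0 1 (-2*t) (t^2) 0 0 0 0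
      calc ∫ x, (u x - t * w x)^2 ∂mu01
          = ∫ x, (0 + 1 * (u x)^2 + (-2*t) * (u x * w x) + t^2 * (w x)^2
              + 0 * (0:ℝ) + 0 * (0:ℝ) + 0 * (0:ℝ) + 0 * (0:ℝ)) ∂mu01 :=
            int_congr (fun x => by ring)
        _ = α - 2*t*γ + t^2*β := by rw [this]; ring
    have := integral_nonneg (μ := mu01) (f := fun x => (u x - t * w x)^2)
      (fun x => sq_nonneg _)
    linarith [e ▸ this]
  have hβ0 : 0 ≤ β := integral_nonneg fun x => sq_nonneg _
  rcases eq_or_lt_of_le hβ0 with h | h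
  · have hγ0 : γ = 0 := by
      by_contra hne
      have h1 := key ((α+1)/(2*γ))
      rw [← h] at h1
      have : 2 * ((α+1)/(2*γ)) * γ = α + 1 := by field_simp
      nlinarith
    have hα0 : 0 ≤ α := integral_nonneg fun x => sq_nonneg _
    nlinarith
  · have h1 := key (γ/β)
    have h2 : γ / β * β = γ := div_mul_cancel₀ _ (ne_of_gt h)
    nlinarith [sq_nonneg γ]

/-- Bessel-type inequality with the constant function and an orthogonal direction. -/
lemma int_bessel {v e : ℝ → ℝ} (hv : BM1 v) (he : BM1 e)
    (h0 : ∫ x, e x ∂mu01 = 0) (hD : 0 < ∫ x, (e x)^2 ∂mu01) :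
    (∫ x, v x ∂mu01)^2 + (∫ x, v x * e x ∂mu01)^2 / (∫ x, (e x)^2 ∂mu01)
      ≤ ∫ x, (v x)^2 ∂mu01 := by
  set D := ∫ x, (e x)^2 ∂mu01 with hDdef
  set a := ∫ x, v x ∂mu01 with ha
  set c := ∫ x, v x * e x ∂mu01 with hc
  set b := c / D with hb
  have e1 : ∫ x, (v x - a - b * e x)^2 ∂mu01
      = (∫ x, (v x)^2 ∂mu01) - 2*a*a - 2*b*c + a^2 + 2*a*b*0 + b^2*D := by
    have := int_comb7 hv.sq hv (hv.mul he) he he.sq (BM1.const 0) (BM1.const 0)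
      (a^2) 1 (-2*a) (-2*b) (2*a*b) (b^2) 0 0
    calc ∫ x, (v x - a - b * e x)^2 ∂mu01
        = ∫ x, (a^2 + 1 * (v x)^2 + (-2*a) * v x + (-2*b) * (v x * e x)
            + (2*a*b) * e x + b^2 * (e x)^2 + 0 * (0:ℝ) + 0 * (0:ℝ)) ∂mu01 :=
          int_congr (fun x => by ring)
      _ = _ := by rw [this, h0, ← ha, ← hc, ← hDdef]; ring
  have hpos := integral_nonneg (μ := mu01) (f := fun x => (v x - a - b * e x)^2)
    (fun x => sq_nonneg _)
  have hbD : b * D = c := div_mul_cancel₀ _ (ne_of_gt hD)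
  have hb2D : b^2 * D = c^2 / D := by
    field_simp [hb]; rw [← hbD]; ring
  have hbc : b * c = c^2 / D := by
    rw [hb]; field_simp
  nlinarith [e1 ▸ hpos]

lemma BM2.snd {F : ℝ → ℝ → ℝ} (h : BM2 F) (y : ℝ) : BM1 fun x => F x y := by
  obtain ⟨hm, C, hC⟩ := h
  exact ⟨hm.comp (measurable_id.prodMk measurable_const), C, fun x => hC x y⟩

lemma BM1.div_const {u : ℝ → ℝ} (hu : BM1 u) (c : ℝ) : BM1 fun x => u x / c := by
  have := hu.mul (BM1.const c⁻¹)
  simpa [div_eq_mul_inv] using this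
set_option linter.unusedSectionVars false
section Kernel

variable (f : ℝ → ℝ → ℝ)

noncomputable def dd (x : ℝ) : ℝ := ∫ y, f x y ∂mu01
noncomputable def gg (x z : ℝ) : ℝ := ∫ y, f x y * f y z ∂mu01
noncomputable def qq (x : ℝ) : ℝ := ∫ y, f x y * dd f y ∂mu01
noncomputable def mm (x : ℝ) : ℝ := ∫ y, f x y * qq f y ∂mu01
noncomputable def kk (x y : ℝ) : ℝ := ∫ z, f y z * gg f x z ∂mu01
noncomputable def DD : ℝ := ∫ x, (dd f x)^2 ∂mu01
noncomputable def ss : ℝ := ∫ x, (qq f x)^2 ∂mu01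
noncomputable def TT : ℝ := ∫ x, ∫ z, (gg f x z)^2 ∂mu01 ∂mu01

variable {f}
variable (hf : Measurable (uncurry f)) (hb : ∀ x y, |f x y| ≤ 1/2)
  (ha : ∀ x y, f y x = - f x y)

section BMfacts
include hf hb

lemma bm2_f : BM2 f := ⟨hf, 1/2, hb⟩
lemma bm1_d : BM1 (dd f) := (bm2_f hf hb).intr
lemma bm2_g : BM2 (gg f) :=
  (((bm2_f hf hb).bm3_13).mul ((bm2_f hf hb).bm3_32)).intr
lemma bm1_q : BM1 (qq f) :=
  ((bm2_f hf hb).mul (bm1_d hf hb).bm2_snd).intr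
lemma bm1_m : BM1 (mm f) :=
  ((bm2_f hf hb).mul (bm1_q hf hb).bm2_snd).intr
lemma bm2_k : BM2 (kk f) :=
  (((bm2_f hf hb).bm3_23).mul ((bm2_g hf hb).bm3_13)).intr

end BMfacts

section Identities
include hf hb ha

lemma int_fst (x : ℝ) : ∫ y, f y x ∂mu01 = - dd f x := by
  have h1 : ∫ y, f y x ∂mu01 = ∫ y, -(f x y) ∂mu01 := int_congr fun y => ha x y
  rw [h1, integral_neg, dd]

omit hf hb in
lemma gsym (x z : ℝ) : gg f z x = gg f x z := by
  refine int_congr fun y => ?_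
  rw [ha y z, ha x y]
  ring

lemma hd0 : ∫ x, dd f x ∂mu01 = 0 := by
  have h1 : ∫ x, dd f x ∂mu01 = ∫ y, ∫ x, f x y ∂mu01 ∂mu01 := (bm2_f hf hb).swap
  have h2 : ∫ y, ∫ x, f x y ∂mu01 ∂mu01 = ∫ y, -(dd f y) ∂mu01 :=
    int_congr fun y => int_fst hf hb ha y
  rw [h2, integral_neg] at h1
  linarith

lemma hgq (x : ℝ) : ∫ z, gg f x z ∂mu01 = qq f x := by
  have hF : BM2 fun z y => f x y * f y z := by
    refine ⟨?_, (1/2) * (1/2), fun z y => abs_mul_le (hb x y) (hb y z)⟩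
    show Measurable fun p : ℝ × ℝ => f x p.2 * f p.2 p.1
    fun_prop
  have h1 : ∫ z, gg f x z ∂mu01 = ∫ y, ∫ z, f x y * f y z ∂mu01 ∂mu01 := hF.swap
  rw [h1]
  exact int_congr fun y => integral_const_mul _ _

lemma hr (x : ℝ) : ∫ y, gg f y x ∂mu01 = qq f x := by
  rw [int_congr fun y => gsym ha x y]
  exact hgq hf hb ha x

lemma hq_int : ∫ x, qq f x ∂mu01 = - DD f := by
  have hF : BM2 fun x y => f x y * dd f y := (bm2_f hf hb).mul (bm1_d hf hb).bm2_snd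
  have h1 : ∫ x, qq f x ∂mu01 = ∫ y, ∫ x, f x y * dd f y ∂mu01 ∂mu01 := hF.swap
  have h2 : ∀ y, ∫ x, f x y * dd f y ∂mu01 = -((dd f y)^2) := by
    intro y
    rw [integral_mul_const, int_fst hf hb ha]
    ring
  rw [h1, int_congr h2, integral_neg, DD]

lemma hB : ∫ x, dd f x * qq f x ∂mu01 = 0 := by
  have hF : BM2 fun x y => dd f x * (f x y * dd f y) :=
    (bm1_d hf hb).bm2_fst.mul ((bm2_f hf hb).mul (bm1_d hf hb).bm2_snd)
  have h0 : ∫ x, dd f x * qq f x ∂mu01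
      = ∫ x, ∫ y, dd f x * (f x y * dd f y) ∂mu01 ∂mu01 :=
    int_congr fun x => (integral_const_mul _ _).symm
  have h2 : ∀ y, ∫ x, dd f x * (f x y * dd f y) ∂mu01 = -(dd f y * qq f y) := by
    intro y
    have e1 : ∫ x, dd f x * (f x y * dd f y) ∂mu01
        = (∫ x, -(f y x * dd f x) ∂mu01) * dd f y := by
      rw [← integral_mul_const]
      exact int_congr fun x => by rw [ha x y]; ring
    rw [e1, integral_neg]
    have : ∫ x, f y x * dd f x ∂mu01 = qq f y := rfl
    rw [this]; ring
  have h3 : ∫ x, dd f x * qq f x ∂mu01 = -∫ y, dd f y * qq f y ∂mu01 := calc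
    ∫ x, dd f x * qq f x ∂mu01
        = ∫ x, ∫ y, dd f x * (f x y * dd f y) ∂mu01 ∂mu01 := h0
    _ = ∫ y, ∫ x, dd f x * (f x y * dd f y) ∂mu01 ∂mu01 := hF.swap
    _ = ∫ y, -(dd f y * qq f y) ∂mu01 := int_congr h2
    _ = -∫ y, dd f y * qq f y ∂mu01 := integral_neg _
  linarith

lemma hm0 : ∫ x, mm f x ∂mu01 = 0 := by
  have hF : BM2 fun x y => f x y * qq f y := (bm2_f hf hb).mul (bm1_q hf hb).bm2_snd
  have h2 : ∀ y, ∫ x, f x y * qq f y ∂mu01 = -(dd f y * qq f y) := by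
    intro y
    rw [integral_mul_const, int_fst hf hb ha]
    ring
  have h3 : ∫ x, mm f x ∂mu01 = -∫ y, dd f y * qq f y ∂mu01 := calc
    ∫ x, mm f x ∂mu01
        = ∫ y, ∫ x, f x y * qq f y ∂mu01 ∂mu01 := hF.swap
    _ = ∫ y, -(dd f y * qq f y) ∂mu01 := int_congr h2
    _ = -∫ y, dd f y * qq f y ∂mu01 := integral_neg _
  rw [h3, hB hf hb ha, neg_zero]

lemma hs0 : ∫ x, (∫ y, f x y * gg f y x ∂mu01) ∂mu01 = 0 := by
  have hF : BM2 fun x y => f x y * gg f x y := (bm2_f hf hb).mul (bm2_g hf hb)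
  have h1 : ∫ x, (∫ y, f x y * gg f y x ∂mu01) ∂mu01
      = ∫ x, ∫ y, f x y * gg f x y ∂mu01 ∂mu01 :=
    int_congr fun x => int_congr fun y => by rw [gsym ha]
  have h3 : ∫ x, ∫ y, f x y * gg f x y ∂mu01 ∂mu01
      = -∫ y, ∫ x, f y x * gg f y x ∂mu01 ∂mu01 := calc
    ∫ x, ∫ y, f x y * gg f x y ∂mu01 ∂mu01
        = ∫ y, ∫ x, f x y * gg f x y ∂mu01 ∂mu01 := hF.swap
    _ = ∫ y, ∫ x, -(f y x * gg f y x) ∂mu01 ∂mu01 :=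
        int_congr fun y => int_congr fun x => by rw [ha y x, gsym ha]; ring
    _ = ∫ y, -(∫ x, f y x * gg f y x ∂mu01) ∂mu01 := int_congr fun y => integral_neg _
    _ = -∫ y, ∫ x, f y x * gg f y x ∂mu01 ∂mu01 := integral_neg _
  rw [h1]
  linarith [h3]

lemma hgd (x : ℝ) : ∫ z, gg f x z * dd f z ∂mu01 = mm f x := by
  have hF : BM2 fun z y => (f x y * f y z) * dd f z :=
    ((((bm2_f hf hb).fst x).bm2_snd).mul ((bm2_f hf hb).swapArgs)).mul
      (bm1_d hf hb).bm2_fst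
  calc ∫ z, gg f x z * dd f z ∂mu01
      = ∫ z, ∫ y, (f x y * f y z) * dd f z ∂mu01 ∂mu01 :=
        int_congr fun z => (integral_mul_const _ _).symm
    _ = ∫ y, ∫ z, (f x y * f y z) * dd f z ∂mu01 ∂mu01 := hF.swap
    _ = ∫ y, ∫ z, f x y * (f y z * dd f z) ∂mu01 ∂mu01 :=
        int_congr fun y => int_congr fun z => by ring
    _ = ∫ y, f x y * qq f y ∂mu01 := int_congr fun y => integral_const_mul _ _
    _ = mm f x := rfl

lemma hK (x : ℝ) : ∫ y, kk f x y ∂mu01 = - mm f x := by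
  have hF : BM2 fun y z => f y z * gg f x z :=
    (bm2_f hf hb).mul (((bm2_g hf hb).fst x).bm2_snd)
  calc ∫ y, kk f x y ∂mu01
      = ∫ z, ∫ y, f y z * gg f x z ∂mu01 ∂mu01 := hF.swap
    _ = ∫ z, -(gg f x z * dd f z) ∂mu01 := by
        refine int_congr fun z => ?_
        rw [integral_mul_const, int_fst hf hb ha]
        ring
    _ = -∫ z, gg f x z * dd f z ∂mu01 := integral_neg _
    _ = - mm f x := by rw [hgd hf hb ha]

lemma hL (x : ℝ) : ∫ y, f x y * kk f x y ∂mu01 = ∫ z, (gg f x z)^2 ∂mu01 := by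
  have hF : BM2 fun y z => f x y * (f y z * gg f x z) :=
    (((bm2_f hf hb).fst x).bm2_fst).mul
      ((bm2_f hf hb).mul (((bm2_g hf hb).fst x).bm2_snd))
  calc ∫ y, f x y * kk f x y ∂mu01
      = ∫ y, ∫ z, f x y * (f y z * gg f x z) ∂mu01 ∂mu01 :=
        int_congr fun y => (integral_const_mul _ _).symm
    _ = ∫ z, ∫ y, f x y * (f y z * gg f x z) ∂mu01 ∂mu01 := hF.swap
    _ = ∫ z, ∫ y, (f x y * f y z) * gg f x z ∂mu01 ∂mu01 :=
        int_congr fun z => int_congr fun y => by ring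
    _ = ∫ z, gg f x z * gg f x z ∂mu01 := int_congr fun z => integral_mul_const _ _
    _ = ∫ z, (gg f x z)^2 ∂mu01 := int_congr fun z => (pow_two _).symm

lemma hdm : ∫ x, dd f x * mm f x ∂mu01 = - ss f := by
  have hF : BM2 fun x y => dd f x * (f x y * qq f y) :=
    (bm1_d hf hb).bm2_fst.mul ((bm2_f hf hb).mul (bm1_q hf hb).bm2_snd)
  have h2 : ∀ y, ∫ x, dd f x * (f x y * qq f y) ∂mu01 = -((qq f y)^2) := by
    intro y
    have e1 : ∫ x, dd f x * (f x y * qq f y) ∂mu01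
        = (∫ x, -(f y x * dd f x) ∂mu01) * qq f y := by
      rw [← integral_mul_const]
      exact int_congr fun x => by rw [ha x y]; ring
    rw [e1, integral_neg]
    have : ∫ x, f y x * dd f x ∂mu01 = qq f y := rfl
    rw [this]; ring
  calc ∫ x, dd f x * mm f x ∂mu01
      = ∫ x, ∫ y, dd f x * (f x y * qq f y) ∂mu01 ∂mu01 :=
        int_congr fun x => (integral_const_mul _ _).symm
    _ = ∫ y, ∫ x, dd f x * (f x y * qq f y) ∂mu01 ∂mu01 := hF.swap
    _ = ∫ y, -((qq f y)^2) ∂mu01 := int_congr h2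
    _ = - ss f := by rw [integral_neg]; rfl

lemma I2 (x zz : ℝ) : ∫ u, (1/2 + f zz u) * (1/2 + f u x) ∂mu01
    = 1/4 + (dd f zz - dd f x)/2 + gg f zz x := by
  have b1 : BM1 (f zz) := (bm2_f hf hb).fst zz
  have b2 : BM1 fun u => f u x := (bm2_f hf hb).snd x
  have b3 : BM1 fun u => f zz u * f u x := b1.mul b2
  have e := int_comb7 b1 b2 b3 (BM1.const 0) (BM1.const 0) (BM1.const 0) (BM1.const 0)
    (1/4) (1/2) (1/2) 1 0 0 0 0
  calc ∫ u, (1/2 + f zz u) * (1/2 + f u x) ∂mu01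
      = ∫ u, (1/4 + (1/2) * f zz u + (1/2) * f u x + 1 * (f zz u * f u x)
          + 0 * (0:ℝ) + 0 * (0:ℝ) + 0 * (0:ℝ) + 0 * (0:ℝ)) ∂mu01 :=
        int_congr fun u => by ring
    _ = 1/4 + (1/2) * dd f zz + (1/2) * (∫ u, f u x ∂mu01) + 1 * gg f zz x
          + 0 * (∫ _, (0:ℝ) ∂mu01) + 0 * (∫ _, (0:ℝ) ∂mu01) + 0 * (∫ _, (0:ℝ) ∂mu01)
          + 0 * (∫ _, (0:ℝ) ∂mu01) := e
    _ = 1/4 + (dd f zz - dd f x)/2 + gg f zz x := by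
        rw [int_fst hf hb ha]; ring

lemma I3y (x : ℝ) :
    ∫ y, (1/2 + f x y) * (1/4 + (dd f y - dd f x)/2 + gg f y x) ∂mu01
      = 1/8 + qq f x - (dd f x)^2/2 + (∫ y, f x y * gg f y x ∂mu01) := by
  have b1 : BM1 (dd f) := bm1_d hf hb
  have b2 : BM1 fun y => gg f y x := (bm2_g hf hb).snd x
  have b3 : BM1 (f x) := (bm2_f hf hb).fst x
  have b4 : BM1 fun y => f x y * dd f y := b3.mul b1
  have b5 : BM1 fun y => f x y * gg f y x := b3.mul b2
  have e := int_comb7 b1 b2 b3 b4 b5 (BM1.const 0) (BM1.const 0)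
    (1/8 - dd f x/4) (1/4) (1/2) (1/4 - dd f x/2) (1/2) 1 0 0
  calc ∫ y, (1/2 + f x y) * (1/4 + (dd f y - dd f x)/2 + gg f y x) ∂mu01
      = ∫ y, ((1/8 - dd f x/4) + (1/4) * dd f y + (1/2) * gg f y x
          + (1/4 - dd f x/2) * f x y + (1/2) * (f x y * dd f y)
          + 1 * (f x y * gg f y x) + 0 * (0:ℝ) + 0 * (0:ℝ)) ∂mu01 :=
        int_congr fun y => by ring
    _ = (1/8 - dd f x/4) + (1/4) * (∫ y, dd f y ∂mu01) + (1/2) * (∫ y, gg f y x ∂mu01)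
          + (1/4 - dd f x/2) * (∫ y, f x y ∂mu01) + (1/2) * (∫ y, f x y * dd f y ∂mu01)
          + 1 * (∫ y, f x y * gg f y x ∂mu01) + 0 * (∫ _, (0:ℝ) ∂mu01)
          + 0 * (∫ _, (0:ℝ) ∂mu01) := e
    _ = _ := by
        rw [hd0 hf hb ha, hr hf hb ha]
        have e1 : ∫ y, f x y ∂mu01 = dd f x := rfl
        have e2 : ∫ y, f x y * dd f y ∂mu01 = qq f x := rfl
        rw [e1, e2]; ring

lemma C3val :
    ∫ x, ∫ y, ∫ z, (1/2 + f x y) * (1/2 + f y z) * (1/2 + f z x) ∂mu01 ∂mu01 ∂mu01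
      = 1/8 - 3/2 * DD f := by
  have hz : ∀ x y, ∫ z, (1/2 + f x y) * (1/2 + f y z) * (1/2 + f z x) ∂mu01
      = (1/2 + f x y) * (1/4 + (dd f y - dd f x)/2 + gg f y x) := by
    intro x y
    calc ∫ z, (1/2 + f x y) * (1/2 + f y z) * (1/2 + f z x) ∂mu01
        = ∫ z, (1/2 + f x y) * ((1/2 + f y z) * (1/2 + f z x)) ∂mu01 :=
          int_congr fun z => by ring
      _ = (1/2 + f x y) * ∫ z, (1/2 + f y z) * (1/2 + f z x) ∂mu01 :=
          integral_const_mul _ _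
      _ = _ := by rw [I2 hf hb ha]
  have hy : ∀ x, ∫ y, ∫ z, (1/2 + f x y) * (1/2 + f y z) * (1/2 + f z x) ∂mu01 ∂mu01
      = 1/8 + qq f x - (dd f x)^2/2 + (∫ y, f x y * gg f y x ∂mu01) := by
    intro x
    rw [int_congr (hz x)]
    exact I3y hf hb ha x
  rw [int_congr hy]
  have b1 : BM1 (qq f) := bm1_q hf hb
  have b2 : BM1 fun x => (dd f x)^2 := (bm1_d hf hb).sq
  have b3 : BM1 fun x => ∫ y, f x y * gg f y x ∂mu01 :=
    ((bm2_f hf hb).mul ((bm2_g hf hb).swapArgs)).intr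
  have e := int_comb7 b1 b2 b3 (BM1.const 0) (BM1.const 0) (BM1.const 0) (BM1.const 0)
    (1/8) 1 (-(1/2)) 1 0 0 0 0
  calc ∫ x, (1/8 + qq f x - (dd f x)^2/2 + (∫ y, f x y * gg f y x ∂mu01)) ∂mu01
      = ∫ x, (1/8 + 1 * qq f x + (-(1/2)) * (dd f x)^2
          + 1 * (∫ y, f x y * gg f y x ∂mu01) + 0 * (0:ℝ) + 0 * (0:ℝ) + 0 * (0:ℝ)
          + 0 * (0:ℝ)) ∂mu01 := int_congr fun x => by ring
    _ = 1/8 + 1 * (∫ x, qq f x ∂mu01) + (-(1/2)) * (∫ x, (dd f x)^2 ∂mu01)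
          + 1 * (∫ x, ∫ y, f x y * gg f y x ∂mu01 ∂mu01) + 0 * (∫ _, (0:ℝ) ∂mu01)
          + 0 * (∫ _, (0:ℝ) ∂mu01) + 0 * (∫ _, (0:ℝ) ∂mu01) + 0 * (∫ _, (0:ℝ) ∂mu01) := e
    _ = 1/8 - 3/2 * DD f := by
        rw [hq_int hf hb ha, hs0 hf hb ha]
        have : ∫ x, (dd f x)^2 ∂mu01 = DD f := rfl
        rw [this]; ring

lemma I4z (x y : ℝ) :
    ∫ z, (1/2 + f y z) * (1/4 + (dd f z - dd f x)/2 + gg f x z) ∂mu01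
      = 1/8 - dd f x/4 + qq f x/2 + (1/4 - dd f x/2) * dd f y + qq f y/2 + kk f x y := by
  have b1 : BM1 (dd f) := bm1_d hf hb
  have b2 : BM1 (gg f x) := (bm2_g hf hb).fst x
  have b3 : BM1 (f y) := (bm2_f hf hb).fst y
  have b4 : BM1 fun z => f y z * dd f z := b3.mul b1
  have b5 : BM1 fun z => f y z * gg f x z := b3.mul b2
  have e := int_comb7 b1 b2 b3 b4 b5 (BM1.const 0) (BM1.const 0)
    (1/8 - dd f x/4) (1/4) (1/2) (1/4 - dd f x/2) (1/2) 1 0 0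
  calc ∫ z, (1/2 + f y z) * (1/4 + (dd f z - dd f x)/2 + gg f x z) ∂mu01
      = ∫ z, ((1/8 - dd f x/4) + (1/4) * dd f z + (1/2) * gg f x z
          + (1/4 - dd f x/2) * f y z + (1/2) * (f y z * dd f z)
          + 1 * (f y z * gg f x z) + 0 * (0:ℝ) + 0 * (0:ℝ)) ∂mu01 :=
        int_congr fun z => by ring
    _ = (1/8 - dd f x/4) + (1/4) * (∫ z, dd f z ∂mu01) + (1/2) * (∫ z, gg f x z ∂mu01)
          + (1/4 - dd f x/2) * (∫ z, f y z ∂mu01) + (1/2) * (∫ z, f y z * dd f z ∂mu01)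
          + 1 * (∫ z, f y z * gg f x z ∂mu01) + 0 * (∫ _, (0:ℝ) ∂mu01)
          + 0 * (∫ _, (0:ℝ) ∂mu01) := e
    _ = _ := by
        rw [hd0 hf hb ha, hgq hf hb ha]
        have e1 : ∫ z, f y z ∂mu01 = dd f y := rfl
        have e2 : ∫ z, f y z * dd f z ∂mu01 = qq f y := rfl
        have e3 : ∫ z, f y z * gg f x z ∂mu01 = kk f x y := rfl
        rw [e1, e2, e3]; ring

lemma I4y (x : ℝ) :
    ∫ y, (1/2 + f x y) * (1/8 - dd f x/4 + qq f x/2 + (1/4 - dd f x/2) * dd f y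
        + qq f y/2 + kk f x y) ∂mu01
      = (1/8 - dd f x/4 + qq f x/2) * (1/2 + dd f x) - DD f/4
        + (1/4 - dd f x/2) * qq f x + ∫ z, (gg f x z)^2 ∂mu01 := by
  have b1 : BM1 (dd f) := bm1_d hf hb
  have b2 : BM1 (qq f) := bm1_q hf hb
  have b3 : BM1 (kk f x) := (bm2_k hf hb).fst x
  have b4 : BM1 (f x) := (bm2_f hf hb).fst x
  have b5 : BM1 fun y => f x y * dd f y := b4.mul b1
  have b6 : BM1 fun y => f x y * qq f y := b4.mul b2
  have b7 : BM1 fun y => f x y * kk f x y := b4.mul b3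
  have e := int_comb7 b1 b2 b3 b4 b5 b6 b7
    ((1/8 - dd f x/4 + qq f x/2)/2) ((1/4 - dd f x/2)/2) (1/4) (1/2)
    (1/8 - dd f x/4 + qq f x/2) (1/4 - dd f x/2) (1/2) 1
  calc ∫ y, (1/2 + f x y) * (1/8 - dd f x/4 + qq f x/2 + (1/4 - dd f x/2) * dd f y
        + qq f y/2 + kk f x y) ∂mu01
      = ∫ y, (((1/8 - dd f x/4 + qq f x/2)/2) + ((1/4 - dd f x/2)/2) * dd f y
          + (1/4) * qq f y + (1/2) * kk f x y + (1/8 - dd f x/4 + qq f x/2) * f x y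
          + (1/4 - dd f x/2) * (f x y * dd f y) + (1/2) * (f x y * qq f y)
          + 1 * (f x y * kk f x y)) ∂mu01 := int_congr fun y => by ring
    _ = ((1/8 - dd f x/4 + qq f x/2)/2) + ((1/4 - dd f x/2)/2) * (∫ y, dd f y ∂mu01)
          + (1/4) * (∫ y, qq f y ∂mu01) + (1/2) * (∫ y, kk f x y ∂mu01)
          + (1/8 - dd f x/4 + qq f x/2) * (∫ y, f x y ∂mu01)
          + (1/4 - dd f x/2) * (∫ y, f x y * dd f y ∂mu01)
          + (1/2) * (∫ y, f x y * qq f y ∂mu01)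
          + 1 * (∫ y, f x y * kk f x y ∂mu01) := e
    _ = _ := by
        rw [hd0 hf hb ha, hq_int hf hb ha, hK hf hb ha, hL hf hb ha]
        have e1 : ∫ y, f x y ∂mu01 = dd f x := rfl
        have e2 : ∫ y, f x y * dd f y ∂mu01 = qq f x := rfl
        have e3 : ∫ y, f x y * qq f y ∂mu01 = mm f x := rfl
        rw [e1, e2, e3]; ring

lemma C4val :
    ∫ x, ∫ y, ∫ z, ∫ u, (1/2 + f x y) * (1/2 + f y z) * (1/2 + f z u) * (1/2 + f u x)
        ∂mu01 ∂mu01 ∂mu01 ∂mu01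
      = 1/16 - DD f + TT f := by
  have hu : ∀ x y zz, ∫ u, (1/2 + f x y) * (1/2 + f y zz) * (1/2 + f zz u) * (1/2 + f u x) ∂mu01
      = (1/2 + f x y) * ((1/2 + f y zz) * (1/4 + (dd f zz - dd f x)/2 + gg f x zz)) := by
    intro x y zz
    calc ∫ u, (1/2 + f x y) * (1/2 + f y zz) * (1/2 + f zz u) * (1/2 + f u x) ∂mu01
        = ∫ u, ((1/2 + f x y) * (1/2 + f y zz)) * ((1/2 + f zz u) * (1/2 + f u x)) ∂mu01 :=
          int_congr fun u => by ring
      _ = ((1/2 + f x y) * (1/2 + f y zz)) * ∫ u, (1/2 + f zz u) * (1/2 + f u x) ∂mu01 :=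
          integral_const_mul _ _
      _ = _ := by rw [I2 hf hb ha, gsym ha]; ring
  have hzl : ∀ x y, ∫ zz, ∫ u, (1/2 + f x y) * (1/2 + f y zz) * (1/2 + f zz u) * (1/2 + f u x) ∂mu01 ∂mu01
      = (1/2 + f x y) * (1/8 - dd f x/4 + qq f x/2 + (1/4 - dd f x/2) * dd f y
          + qq f y/2 + kk f x y) := by
    intro x y
    rw [int_congr (hu x y)]
    rw [integral_const_mul]
    rw [I4z hf hb ha]
  have hyl : ∀ x, ∫ y, ∫ zz, ∫ u, (1/2 + f x y) * (1/2 + f y zz) * (1/2 + f zz u) * (1/2 + f u x) ∂mu01 ∂mu01 ∂mu01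
      = (1/8 - dd f x/4 + qq f x/2) * (1/2 + dd f x) - DD f/4
        + (1/4 - dd f x/2) * qq f x + ∫ zz, (gg f x zz)^2 ∂mu01 := by
    intro x
    rw [int_congr (hzl x)]
    exact I4y hf hb ha x
  rw [int_congr hyl]
  have b1 : BM1 fun x => (dd f x)^2 := (bm1_d hf hb).sq
  have b2 : BM1 (qq f) := bm1_q hf hb
  have b3 : BM1 fun x => ∫ zz, (gg f x zz)^2 ∂mu01 := ((bm2_g hf hb).sq).intr
  have e := int_comb7 b1 b2 b3 (BM1.const 0) (BM1.const 0) (BM1.const 0) (BM1.const 0)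
    (1/16 - DD f/4) (-(1/4)) (1/2) 1 0 0 0 0
  calc ∫ x, ((1/8 - dd f x/4 + qq f x/2) * (1/2 + dd f x) - DD f/4
        + (1/4 - dd f x/2) * qq f x + ∫ zz, (gg f x zz)^2 ∂mu01) ∂mu01
      = ∫ x, ((1/16 - DD f/4) + (-(1/4)) * (dd f x)^2 + (1/2) * qq f x
          + 1 * (∫ zz, (gg f x zz)^2 ∂mu01) + 0 * (0:ℝ) + 0 * (0:ℝ) + 0 * (0:ℝ)
          + 0 * (0:ℝ)) ∂mu01 := int_congr fun x => by ring
    _ = (1/16 - DD f/4) + (-(1/4)) * (∫ x, (dd f x)^2 ∂mu01) + (1/2) * (∫ x, qq f x ∂mu01)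
          + 1 * (∫ x, ∫ zz, (gg f x zz)^2 ∂mu01 ∂mu01) + 0 * (∫ _, (0:ℝ) ∂mu01)
          + 0 * (∫ _, (0:ℝ) ∂mu01) + 0 * (∫ _, (0:ℝ) ∂mu01) + 0 * (∫ _, (0:ℝ) ∂mu01) := e
    _ = 1/16 - DD f + TT f := by
        rw [hq_int hf hb ha]
        have e1 : ∫ x, (dd f x)^2 ∂mu01 = DD f := rfl
        have e2 : ∫ x, ∫ zz, (gg f x zz)^2 ∂mu01 ∂mu01 = TT f := rfl
        rw [e1, e2]; ring

lemma T_ge : TT f ≥ 2 * (DD f)^2 := by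
  have hD0 : 0 ≤ DD f := integral_nonneg fun x => sq_nonneg _
  rcases eq_or_lt_of_le hD0 with hD | hD
  · have : 0 ≤ TT f :=
      integral_nonneg fun x => integral_nonneg fun z => sq_nonneg _
    rw [← hD]
    simpa using this
  · -- s ≥ D^2
    have hone : BM1 fun _ : ℝ => (1:ℝ) := BM1.const 1
    have hcs1 := int_cs (bm1_q hf hb) hone
    have e1 : ∫ x, qq f x * 1 ∂mu01 = - DD f := by
      rw [int_congr fun x => mul_one (qq f x)]
      exact hq_int hf hb ha
    have e2 : ∫ x, ((1:ℝ))^2 ∂mu01 = 1 := by simp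
    rw [e1, e2, mul_one] at hcs1
    have hsD : (DD f)^2 ≤ ss f := by
      have : (- DD f)^2 = (DD f)^2 := by ring
      rw [this] at hcs1
      exact hcs1
    -- Bessel pointwise
    have hbes : ∀ x, (qq f x)^2 + (mm f x)^2 / DD f ≤ ∫ zz, (gg f x zz)^2 ∂mu01 := by
      intro x
      have := int_bessel ((bm2_g hf hb).fst x) (bm1_d hf hb) (hd0 hf hb ha) hD
      rwa [hgq hf hb ha, hgd hf hb ha] at this
    have bL : BM1 fun x => (qq f x)^2 + (mm f x)^2 / DD f :=
      ((bm1_q hf hb).sq).add (((bm1_m hf hb).sq).div_const (DD f))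
    have bR : BM1 fun x => ∫ zz, (gg f x zz)^2 ∂mu01 := ((bm2_g hf hb).sq).intr
    have hmono : ∫ x, ((qq f x)^2 + (mm f x)^2 / DD f) ∂mu01 ≤ TT f :=
      integral_mono bL.integrable bR.integrable hbes
    have hsplit : ∫ x, ((qq f x)^2 + (mm f x)^2 / DD f) ∂mu01
        = ss f + (∫ x, (mm f x)^2 ∂mu01) / DD f := by
      rw [integral_add ((bm1_q hf hb).sq).integrable
        (((bm1_m hf hb).sq).div_const (DD f)).integrable, integral_div]
      rfl
    -- ∫ m^2 ≥ s^2 / D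
    have hcs2 := int_cs (bm1_d hf hb) (bm1_m hf hb)
    rw [hdm hf hb ha] at hcs2
    have hM : (ss f)^2 ≤ DD f * ∫ x, (mm f x)^2 ∂mu01 := by
      have : (- ss f)^2 = (ss f)^2 := by ring
      rw [this] at hcs2
      calc (ss f)^2 ≤ (∫ x, (dd f x)^2 ∂mu01) * ∫ x, (mm f x)^2 ∂mu01 := hcs2
        _ = DD f * ∫ x, (mm f x)^2 ∂mu01 := rfl
    set M := ∫ x, (mm f x)^2 ∂mu01 with hMdef
    have hM0 : 0 ≤ M := integral_nonneg fun x => sq_nonneg _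
    have hTT : ss f + M / DD f ≤ TT f := by rw [hsplit] at hmono; exact hmono
    -- conclude
    have hMD : (DD f)^2 ≤ M / DD f := by
      rw [le_div_iff₀ hD]
      nlinarith [hsD, sq_nonneg (DD f)]
    nlinarith [hTT, hsD, hMD]

end Identities
end Kernel

/-- The density of the directed four-cycle C₄ in a tournament limit. -/
noncomputable def cycle4Density (W : ℝ → ℝ → ℝ) : ℝ :=
  ∫ x in Set.Icc (0:ℝ) 1, ∫ y in Set.Icc (0:ℝ) 1, ∫ z in Set.Icc (0:ℝ) 1,
    ∫ u in Set.Icc (0:ℝ) 1, W x y * W y z * W z u * W u x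

/-- Regime of two parts for tournament limits: t(C₄,W) ≥ g(t(C₃,W)). -/
theorem stmt_14 (W : ℝ → ℝ → ℝ)
    (hmeas : Measurable (Function.uncurry W))
    (hrange : ∀ x ∈ Set.Icc (0:ℝ) 1, ∀ y ∈ Set.Icc (0:ℝ) 1, W x y ∈ Set.Icc (0:ℝ) 1)
    (hsym : ∀ x ∈ Set.Icc (0:ℝ) 1, ∀ y ∈ Set.Icc (0:ℝ) 1, W x y + W y x = 1)
    (z : ℝ) (hz : 1/2 ≤ z) (hz1 : z ≤ 1)
    (h3 : cycle3Density W = (z ^ 3 + (1 - z) ^ 3) / 8) :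
    cycle4Density W ≥ (z ^ 4 + (1 - z) ^ 4) / 16 := by
  classical
  set I : Set ℝ := Set.Icc (0:ℝ) 1 with hI
  set f : ℝ → ℝ → ℝ := fun x y => if x ∈ I ∧ y ∈ I then W x y - 1/2 else 0 with hfdef
  have hf : Measurable (uncurry f) := by
    have : (uncurry f) = fun p : ℝ × ℝ =>
        if p ∈ I ×ˢ I then W p.1 p.2 - 1/2 else 0 := by
      funext p
      simp [uncurry, hfdef, Set.mem_prod]
    rw [this]
    exact Measurable.ite (measurableSet_Icc.prod measurableSet_Icc)
      (hmeas.sub measurable_const) measurable_const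
  have hb : ∀ x y, |f x y| ≤ 1/2 := by
    intro x y
    by_cases h : x ∈ I ∧ y ∈ I
    · have := hrange x h.1 y h.2
      rw [Set.mem_Icc] at this
      simp only [hfdef, if_pos h]
      rw [abs_le]
      constructor <;> linarith [this.1, this.2]
    · simp only [hfdef, if_neg h]
      norm_num
  have ha : ∀ x y, f y x = - f x y := by
    intro x y
    by_cases h : x ∈ I ∧ y ∈ I
    · have h' : y ∈ I ∧ x ∈ I := ⟨h.2, h.1⟩
      simp only [hfdef, if_pos h, if_pos h']
      have := hsym x h.1 y h.2
      linarith
    · have h' : ¬(y ∈ I ∧ x ∈ I) := fun hc => h ⟨hc.2, hc.1⟩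
      simp only [hfdef, if_neg h, if_neg h']
      ring
  have hWf : ∀ x ∈ I, ∀ y ∈ I, W x y = 1/2 + f x y := by
    intro x hx y hy
    simp only [hfdef, if_pos (And.intro hx hy)]
    ring
  have E3 : cycle3Density W
      = ∫ x, ∫ y, ∫ zz, (1/2 + f x y) * (1/2 + f y zz) * (1/2 + f zz x)
          ∂mu01 ∂mu01 ∂mu01 := by
    rw [cycle3Density]
    refine setIntegral_congr_fun measurableSet_Icc fun x hx => ?_
    refine setIntegral_congr_fun measurableSet_Icc fun y hy => ?_
    refine setIntegral_congr_fun measurableSet_Icc fun zz hzz => ?_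
    rw [hWf x hx y hy, hWf y hy zz hzz, hWf zz hzz x hx]
  have E4 : cycle4Density W
      = ∫ x, ∫ y, ∫ zz, ∫ u, (1/2 + f x y) * (1/2 + f y zz) * (1/2 + f zz u)
          * (1/2 + f u x) ∂mu01 ∂mu01 ∂mu01 ∂mu01 := by
    rw [cycle4Density]
    refine setIntegral_congr_fun measurableSet_Icc fun x hx => ?_
    refine setIntegral_congr_fun measurableSet_Icc fun y hy => ?_
    refine setIntegral_congr_fun measurableSet_Icc fun zz hzz => ?_
    refine setIntegral_congr_fun measurableSet_Icc fun u hu => ?_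
    rw [hWf x hx y hy, hWf y hy zz hzz, hWf zz hzz u hu, hWf u hu x hx]
  have h3' : 1/8 - 3/2 * DD f = (z ^ 3 + (1 - z) ^ 3) / 8 := by
    rw [← C3val hf hb ha, ← E3, h3]
  have hcube : z ^ 3 + (1 - z) ^ 3 = 1 - 3 * (z * (1 - z)) := by ring
  have hD : DD f = z * (1 - z) / 4 := by
    rw [hcube] at h3'
    linarith
  have h4 : cycle4Density W = 1/16 - DD f + TT f := by
    rw [E4, C4val hf hb ha]
  have hT := T_ge hf hb ha
  have hgoal : 1/16 - DD f + 2 * (DD f)^2 = (z ^ 4 + (1 - z) ^ 4) / 16 := by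
    rw [hD]; ring
  rw [ge_iff_le, ← hgoal, h4]
  linarith
end
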